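/- arXiv:1404.2730 — 2 statements merged into one kernel-verified Lean document; each statement's English description precedes it below -/
import Mathlib

section
/- Let 𝒳 = χ^⊕ be a cyclically symmetric homogeneous polynomial of degree 2s+2 on ℝ^N × ℝ^N (s ≥ 1), and let T^t denote the time-t flow of its Hamiltonian vector field X_𝒳. Let R' > 0 and 0 < δ < R', and assume |X_𝒳|_{R'} < δ/e. Then for every |t| ≤ 1 and every z with ‖z‖ ≤ R' − δ one has ‖T^t(z) − z‖ ≤ (1/(1−c)) |X_𝒳|_1 ‖z‖^{2s+1}, where c := (e/δ) |X_𝒳|_{R'} < 1. The estimate holds with ‖·‖ either the Euclidean (ℓ²) or the supremum (ℓ^∞) norm on ℝ^{2N}. -/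
open MvPolynomial Finset Real

/-- index set for the `2N` variables: `inl j` ↦ `x_j`, `inr j` ↦ `y_j` (indices mod `N`). -/
abbrev Idx (N : ℕ) := Fin N ⊕ Fin N

open scoped Fin.IntCast in
/-- the cyclic shift `τ^s` (`s ∈ ℤ`) acting on polynomials: `τ^s X_j = X_{j+s}`
(indices mod `N`), separately on the `x` and `y` variables, so that
`(τ^s f)(x,y) = f(τ^s x, τ^s y)`. -/
noncomputable def tauPow (N : ℕ) [NeZero N] (s : ℤ) (f : MvPolynomial (Idx N) ℝ) :
    MvPolynomial (Idx N) ℝ :=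
  rename (Sum.map (· + (s : Fin N)) (· + (s : Fin N))) f

open scoped Fin.CommRing

/-- `f ↦ f^⊕ := ∑_{l=1}^N τ^l f`. -/
noncomputable def oplus (N : ℕ) [NeZero N] (f : MvPolynomial (Idx N) ℝ) :
    MvPolynomial (Idx N) ℝ :=
  ∑ l ∈ Finset.range N, tauPow N ((l : ℤ) + 1) f

/-- the polynomial norm `‖f‖_R`; for a homogeneous polynomial of degree `s` it equals
`R^s ∑_{|j|+|k|=s} |f_{j,k}|`. -/
noncomputable def pnorm {N : ℕ} (R : ℝ) (f : MvPolynomial (Idx N) ℝ) : ℝ :=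
  ∑ d ∈ f.support, |f.coeff d| * R ^ (d.sum fun _ e => e)

/-- the Poisson bracket `{f,g} = ∑_j (∂f/∂x_j ∂g/∂y_j − ∂f/∂y_j ∂g/∂x_j)`. -/
noncomputable def poisson (N : ℕ) (f g : MvPolynomial (Idx N) ℝ) : MvPolynomial (Idx N) ℝ :=
  ∑ j : Fin N,
    (pderiv (Sum.inl j) f * pderiv (Sum.inr j) g - pderiv (Sum.inr j) f * pderiv (Sum.inl j) g)

/-- the norm `|X_F|_R := ‖X_1‖_R + ‖X_{N+1}‖_R` of the Hamiltonian vector field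
`X_F = J∇F` (here `X_1 = ∂F/∂y_1` and `X_{N+1} = −∂F/∂x_1`). -/
noncomputable def hamNorm (N : ℕ) [NeZero N] (R : ℝ) (F : MvPolynomial (Idx N) ℝ) : ℝ :=
  pnorm R (pderiv (Sum.inr 0) F) + pnorm R (-pderiv (Sum.inl 0) F)

/-- the Hamiltonian vector field `X_F = J∇F` as a map on the phase space `ℝ^{2N}`:
`ẋ_j = ∂F/∂y_j`, `ẏ_j = −∂F/∂x_j`. -/
noncomputable def Xvec (N : ℕ) (F : MvPolynomial (Idx N) ℝ) (z : Idx N → ℝ) : Idx N → ℝ :=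
  Sum.elim (fun j => eval z (pderiv (Sum.inr j) F)) (fun j => -eval z (pderiv (Sum.inl j) F))

/-- the euclidean (`ℓ²`) norm on `ℝ^{2N}`; the supremum (`ℓ^∞`) norm is the `Pi` norm `‖·‖`. -/
noncomputable def enorm₂ {N : ℕ} (z : Idx N → ℝ) : ℝ :=
  Real.sqrt (∑ l, z l ^ 2)

/-- shift map -/
def rho (N : ℕ) [NeZero N] (a : Fin N) : Idx N → Idx N := Sum.map (· + a) (· + a)

lemma rho_injective (N : ℕ) [NeZero N] (a : Fin N) : Function.Injective (rho N a) :=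
  Function.Injective.sumMap (fun x y h => by simpa using h) (fun x y h => by simpa using h)

lemma rho_comp (N : ℕ) [NeZero N] (a b : Fin N) :
    rho N a ∘ rho N b = rho N (b + a) := by
  funext i; cases i <;> simp [rho, add_assoc]

lemma tauPow_eq_rename (N : ℕ) [NeZero N] (s : ℤ) (f : MvPolynomial (Idx N) ℝ) :
    tauPow N s f = rename (rho N (s : Fin N)) f := rfl

lemma tauPow_congr (N : ℕ) [NeZero N] {a b : ℤ} (h : a ≡ b [ZMOD (N : ℤ)])
    (f : MvPolynomial (Idx N) ℝ) : tauPow N a f = tauPow N b f := by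
  have hd : (N : ℤ) ∣ b - a := Int.ModEq.dvd h
  obtain ⟨k, hk⟩ := hd
  have hb : b = a + N * k := by linarith
  have : ((b : ℤ) : Fin N) = ((a : ℤ) : Fin N) := by
    rw [hb]
    push_cast
    simp [Fin.natCast_self]
  rw [tauPow, tauPow, this]

lemma tauPow_tauPow (N : ℕ) [NeZero N] (a b : ℤ) (f : MvPolynomial (Idx N) ℝ) :
    tauPow N a (tauPow N b f) = tauPow N (a + b) f := by
  rw [tauPow_eq_rename, tauPow_eq_rename, tauPow_eq_rename, rename_rename, rho_comp]
  norm_cast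
  rw [add_comm]

lemma tauPow_oplus_one (N : ℕ) [NeZero N] (χ : MvPolynomial (Idx N) ℝ) :
    tauPow N 1 (oplus N χ) = oplus N χ := by
  have hN : 0 < N := Nat.pos_of_ne_zero (NeZero.ne N)
  rw [oplus, tauPow_eq_rename, map_sum]
  simp only [← tauPow_eq_rename, tauPow_tauPow]
  apply Finset.sum_nbij' (i := fun l => (l + 1) % N) (j := fun l => (l + (N - 1)) % N)
  · intro l hl; exact Finset.mem_range.mpr (Nat.mod_lt _ hN)
  · intro l hl; exact Finset.mem_range.mpr (Nat.mod_lt _ hN)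
  · intro l hl
    rw [Nat.mod_add_mod, show l + 1 + (N - 1) = l + N by omega, Nat.add_mod_right,
      Nat.mod_eq_of_lt (Finset.mem_range.mp hl)]
  · intro l hl
    rw [Nat.mod_add_mod, show l + (N - 1) + 1 = l + N by omega, Nat.add_mod_right,
      Nat.mod_eq_of_lt (Finset.mem_range.mp hl)]
  · intro l hl
    apply tauPow_congr
    show (1 : ℤ) + ((l : ℤ) + 1) ≡ (((l + 1) % N : ℕ) : ℤ) + 1 [ZMOD (N : ℤ)]
    have h : ((l : ℤ) + 1) % (N : ℤ) ≡ (l : ℤ) + 1 [ZMOD (N : ℤ)] :=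
      Int.emod_emod_of_dvd _ dvd_rfl
    push_cast
    have h2 := h.symm.add_right 1
    calc (1 : ℤ) + ((l : ℤ) + 1) = ((l : ℤ) + 1) + 1 := by ring
      _ ≡ ((l : ℤ) + 1) % (N : ℤ) + 1 [ZMOD (N : ℤ)] := h2

lemma tauPow_oplus_nat (N : ℕ) [NeZero N] (χ : MvPolynomial (Idx N) ℝ) (k : ℕ) :
    tauPow N (k : ℤ) (oplus N χ) = oplus N χ := by
  induction k with
  | zero =>
    show rename (rho N ((0 : ℤ) : Fin N)) _ = _
    have : ((0 : ℤ) : Fin N) = 0 := by push_cast; rfl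
    rw [this]
    have : rho N (0 : Fin N) = id := by funext i; cases i <;> simp [rho]
    rw [this, rename_id, AlgHom.id_apply]
  | succ n ih =>
    have : ((n + 1 : ℕ) : ℤ) = 1 + (n : ℤ) := by push_cast; ring
    rw [this, ← tauPow_tauPow, ih, tauPow_oplus_one]

lemma pderiv_oplus_shift (N : ℕ) [NeZero N] (χ : MvPolynomial (Idx N) ℝ) (j : Fin N)
    (i₀ : Idx N) :
    pderiv (rho N j i₀) (oplus N χ) = rename (rho N j) (pderiv i₀ (oplus N χ)) := by
  conv_lhs => rw [← tauPow_oplus_nat N χ (j : ℕ)]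
  rw [tauPow_eq_rename]
  have hj : (((j : ℕ) : ℤ) : Fin N) = j := by
    rw [Int.cast_natCast, Fin.cast_val_eq_self]
  rw [hj]
  exact pderiv_rename (rho_injective N j) i₀ (oplus N χ)

lemma enorm_nonneg {N : ℕ} (z : Idx N → ℝ) : 0 ≤ enorm₂ z := Real.sqrt_nonneg _

lemma sq_enorm {N : ℕ} (z : Idx N → ℝ) : (enorm₂ z) ^ 2 = ∑ l, z l ^ 2 :=
  Real.sq_sqrt (Finset.sum_nonneg fun l _ => sq_nonneg _)

lemma abs_le_enorm {N : ℕ} (z : Idx N → ℝ) (l : Idx N) : |z l| ≤ enorm₂ z := by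
  rw [enorm₂, show |z l| = Real.sqrt ((z l)^2) by rw [Real.sqrt_sq_eq_abs]]
  exact Real.sqrt_le_sqrt (Finset.single_le_sum (fun i _ => sq_nonneg (z i)) (Finset.mem_univ l))

lemma isHomogeneous_pderiv {N : ℕ} (f : MvPolynomial (Idx N) ℝ) (n : ℕ) (i : Idx N)
    (h : f.IsHomogeneous (n + 1)) : (pderiv i f).IsHomogeneous n := by
  classical
  rw [show f = ∑ d ∈ f.support, monomial d (coeff d f) from (f.support_sum_monomial_coeff).symm]
  rw [map_sum]
  apply IsHomogeneous.sum
  intro d hd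
  rw [pderiv_monomial]
  rcases eq_or_ne (d i) 0 with h0 | h0
  · rw [h0]; simp only [mul_zero, Nat.cast_zero]
    simpa using isHomogeneous_zero (Idx N) ℝ n
  · apply isHomogeneous_monomial
    have hdeg : (Finsupp.weight 1) d = n + 1 := h (mem_support_iff.mp hd)
    have hle : Finsupp.single i 1 ≤ d := by
      rw [Finsupp.single_le_iff]; omega
    have hsum : (d - Finsupp.single i 1) + Finsupp.single i 1 = d := tsub_add_cancel_of_le hle
    have h2 := congrArg (Finsupp.weight (1 : Idx N → ℕ)) hsum
    rw [map_add] at h2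
    have hws : (Finsupp.weight (1 : Idx N → ℕ)) (Finsupp.single i 1) = 1 := by
      simp [Finsupp.weight_apply, Finsupp.sum_single_index]
    rw [Finsupp.degree_eq_weight_one]
    exact (show (Finsupp.weight (1 : Idx N → ℕ)) (d - Finsupp.single i 1) = n by omega)

lemma isHomogeneous_oplus (N : ℕ) [NeZero N] (χ : MvPolynomial (Idx N) ℝ) (n : ℕ)
    (h : χ.IsHomogeneous n) : (oplus N χ).IsHomogeneous n := by
  apply IsHomogeneous.sum
  intro l _
  exact h.rename_isHomogeneous

lemma degree_eq_of_mem_support {N : ℕ} {f : MvPolynomial (Idx N) ℝ} {p : ℕ}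
    (hf : f.IsHomogeneous p) {d : (Idx N) →₀ ℕ} (hd : d ∈ f.support) :
    (d.sum fun _ e => e) = p := by
  have h1 : (Finsupp.weight 1) d = p := hf (mem_support_iff.mp hd)
  have : (d.sum fun _ e => e) = Finsupp.degree d := rfl
  rw [this, Finsupp.degree_eq_weight_one]; exact h1

lemma pnorm_one {N : ℕ} (f : MvPolynomial (Idx N) ℝ) :
    pnorm 1 f = ∑ d ∈ f.support, |f.coeff d| := by
  simp [pnorm]

lemma pnorm_nonneg {N : ℕ} {R : ℝ} (hR : 0 ≤ R) (f : MvPolynomial (Idx N) ℝ) :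
    0 ≤ pnorm R f :=
  Finset.sum_nonneg fun d _ => mul_nonneg (abs_nonneg _) (pow_nonneg hR _)

lemma pnorm_neg {N : ℕ} (R : ℝ) (f : MvPolynomial (Idx N) ℝ) :
    pnorm R (-f) = pnorm R f := by
  rw [pnorm, pnorm, MvPolynomial.support_neg]
  apply Finset.sum_congr rfl
  intro d _
  rw [MvPolynomial.coeff_neg, abs_neg]

lemma pnorm_scale {N : ℕ} {f : MvPolynomial (Idx N) ℝ} {p : ℕ} (hf : f.IsHomogeneous p)
    (R : ℝ) : pnorm R f = pnorm 1 f * R ^ p := by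
  rw [pnorm, pnorm_one, Finset.sum_mul]
  apply Finset.sum_congr rfl
  intro d hd
  rw [degree_eq_of_mem_support hf hd]

lemma abs_eval_le {N : ℕ} {f : MvPolynomial (Idx N) ℝ} {p : ℕ} (hf : f.IsHomogeneous p)
    {w : Idx N → ℝ} {W : ℝ} (hW : ∀ l, |w l| ≤ W) (hW0 : 0 ≤ W) :
    |eval w f| ≤ pnorm 1 f * W ^ p := by
  rw [eval_eq', pnorm_one, Finset.sum_mul]
  refine (Finset.abs_sum_le_sum_abs _ _).trans ?_
  apply Finset.sum_le_sum
  intro d hd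
  rw [abs_mul]
  apply mul_le_mul_of_nonneg_left ?_ (abs_nonneg _) |>.trans
    (le_of_eq rfl)
  calc |∏ i, w i ^ d i| = ∏ i, |w i| ^ d i := by
        rw [Finset.abs_prod]; exact Finset.prod_congr rfl fun i _ => (abs_pow _ _)
    _ ≤ ∏ i, W ^ d i := by
        apply Finset.prod_le_prod (fun i _ => pow_nonneg (abs_nonneg _) _)
        intro i _
        exact pow_le_pow_left₀ (abs_nonneg _) (hW i) _
    _ = W ^ (∑ i, d i) := by rw [Finset.prod_pow_eq_pow_sum]
    _ = W ^ p := by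
        congr 1
        rw [← degree_eq_of_mem_support hf hd]
        exact (Finsupp.sum_fintype d (fun _ e => e) (fun _ => rfl)).symm

lemma prod_abs_le_pick {N : ℕ} {d : Idx N →₀ ℕ} {p : ℕ}
    (hdeg : (∑ i, d i) = p) {i₀ : Idx N} (hi₀ : d i₀ ≠ 0)
    {w : Idx N → ℝ} {W : ℝ} (hW : ∀ l, |w l| ≤ W) :
    ∏ i, |w i| ^ d i ≤ W ^ (p - 1) * |w i₀| := by
  have hW0 : 0 ≤ W := le_trans (abs_nonneg _) (hW i₀)
  have h1 : d i₀ ≥ 1 := Nat.one_le_iff_ne_zero.mpr hi₀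
  rw [← Finset.mul_prod_erase Finset.univ _ (Finset.mem_univ i₀)]
  have hstep : |w i₀| ^ d i₀ ≤ |w i₀| * W ^ (d i₀ - 1) := by
    calc |w i₀| ^ d i₀ = |w i₀| * |w i₀| ^ (d i₀ - 1) := by
          rw [← pow_succ']; congr 1; omega
      _ ≤ |w i₀| * W ^ (d i₀ - 1) :=
          mul_le_mul_of_nonneg_left (pow_le_pow_left₀ (abs_nonneg _) (hW i₀) _) (abs_nonneg _)
  calc |w i₀| ^ d i₀ * ∏ i ∈ Finset.univ.erase i₀, |w i| ^ d i
      ≤ (|w i₀| * W ^ (d i₀ - 1)) * ∏ i ∈ Finset.univ.erase i₀, W ^ d i := by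
        apply mul_le_mul hstep
        · apply Finset.prod_le_prod (fun i _ => pow_nonneg (abs_nonneg _) _)
          intro i _
          exact pow_le_pow_left₀ (abs_nonneg _) (hW i) _
        · exact Finset.prod_nonneg fun i _ => pow_nonneg (abs_nonneg _) _
        · exact mul_nonneg (abs_nonneg _) (pow_nonneg hW0 _)
    _ = W ^ ((d i₀ - 1) + ∑ i ∈ Finset.univ.erase i₀, d i) * |w i₀| := by
        rw [Finset.prod_pow_eq_pow_sum, mul_assoc, ← pow_add]; ring
    _ = W ^ (p - 1) * |w i₀| := by
        congr 2
        have : d i₀ + ∑ i ∈ Finset.univ.erase i₀, d i = p := by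
          rw [Finset.add_sum_erase Finset.univ _ (Finset.mem_univ i₀)] at *
          · exact hdeg
        omega

lemma sum_sq_shift_le {N : ℕ} [NeZero N] {f : MvPolynomial (Idx N) ℝ} {p : ℕ} (hp : 1 ≤ p)
    (hf : f.IsHomogeneous p) (z : Idx N → ℝ) :
    ∑ j : Fin N, (eval (z ∘ rho N j) f) ^ 2 ≤ (pnorm 1 f) ^ 2 * (enorm₂ z) ^ (2 * p) := by
  classical
  set W := enorm₂ z with hWdef
  have hW0 : 0 ≤ W := enorm_nonneg z
  have hWl : ∀ (j : Fin N) (l : Idx N), |(z ∘ rho N j) l| ≤ W := fun j l => abs_le_enorm z _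
  -- the monomial magnitudes
  set m : Fin N → ((Idx N) →₀ ℕ) → ℝ := fun j d => ∏ i, |(z ∘ rho N j) i| ^ d i with hm
  have hm0 : ∀ j d, 0 ≤ m j d := fun j d =>
    Finset.prod_nonneg fun i _ => pow_nonneg (abs_nonneg _) _
  -- step 1: |eval| ≤ ∑ |c| m
  have step1 : ∀ j : Fin N, |eval (z ∘ rho N j) f| ≤ ∑ d ∈ f.support, |f.coeff d| * m j d := by
    intro j
    rw [eval_eq']
    refine (Finset.abs_sum_le_sum_abs _ _).trans ?_
    apply Finset.sum_le_sum
    intro d _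
    rw [abs_mul]
    apply mul_le_mul_of_nonneg_left _ (abs_nonneg _)
    rw [Finset.abs_prod]
    apply le_of_eq
    exact Finset.prod_congr rfl fun i _ => (abs_pow _ _)
  -- step 2: squared Cauchy–Schwarz
  have step2 : ∀ j : Fin N, (eval (z ∘ rho N j) f) ^ 2 ≤
      (pnorm 1 f) * ∑ d ∈ f.support, |f.coeff d| * (m j d) ^ 2 := by
    intro j
    have h1 : (eval (z ∘ rho N j) f) ^ 2 ≤ (∑ d ∈ f.support, |f.coeff d| * m j d) ^ 2 := by
      rw [← sq_abs]
      exact pow_le_pow_left₀ (abs_nonneg _) (step1 j) 2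
    refine h1.trans ?_
    rw [pnorm_one]
    exact Finset.sum_sq_le_sum_mul_sum_of_sq_eq_mul f.support
      (fun d _ => abs_nonneg _) (fun d _ => mul_nonneg (abs_nonneg _) (sq_nonneg _))
      (fun d _ => by ring)
  -- step 3: for each d in support, ∑_j (m j d)^2 ≤ W^(2p)
  have step3 : ∀ d ∈ f.support, ∑ j : Fin N, (m j d) ^ 2 ≤ W ^ (2 * p) := by
    intro d hd
    have hdeg : (∑ i, d i) = p := by
      rw [← degree_eq_of_mem_support hf hd]
      exact (Finsupp.sum_fintype d (fun _ e => e) (fun _ => rfl)).symm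
    have hdne : d ≠ 0 := by
      intro h0
      rw [h0] at hdeg; simp at hdeg; omega
    obtain ⟨i₀, hi₀⟩ := Finsupp.support_nonempty_iff.mpr hdne
    have hi₀' : d i₀ ≠ 0 := Finsupp.mem_support_iff.mp hi₀
    have hpick : ∀ j : Fin N, (m j d) ^ 2 ≤ (W ^ (p - 1)) ^ 2 * (z (rho N j i₀)) ^ 2 := by
      intro j
      have := prod_abs_le_pick hdeg hi₀' (hWl j)
      calc (m j d) ^ 2 ≤ (W ^ (p - 1) * |(z ∘ rho N j) i₀|) ^ 2 :=
            pow_le_pow_left₀ (hm0 j d) this 2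
        _ = (W ^ (p - 1)) ^ 2 * (z (rho N j i₀)) ^ 2 := by
            rw [mul_pow, sq_abs]; rfl
    have hsumz : ∑ j : Fin N, (z (rho N j i₀)) ^ 2 ≤ W ^ 2 := by
      rw [hWdef, sq_enorm]
      cases i₀ with
      | inl i =>
        have hbij : ∑ j : Fin N, (z (rho N j (Sum.inl i))) ^ 2
            = ∑ k : Fin N, (z (Sum.inl k)) ^ 2 := by
          apply Fintype.sum_bijective (fun j : Fin N => i + j) (Equiv.addLeft i).bijective
          intro j; simp [rho]
        rw [hbij, Fintype.sum_sum_type (fun l => z l ^ 2)]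
        exact le_add_of_nonneg_right (Finset.sum_nonneg fun k _ => sq_nonneg _)
      | inr i =>
        have hbij : ∑ j : Fin N, (z (rho N j (Sum.inr i))) ^ 2
            = ∑ k : Fin N, (z (Sum.inr k)) ^ 2 := by
          apply Fintype.sum_bijective (fun j : Fin N => i + j) (Equiv.addLeft i).bijective
          intro j; simp [rho]
        rw [hbij, Fintype.sum_sum_type (fun l => z l ^ 2)]
        exact le_add_of_nonneg_left (Finset.sum_nonneg fun k _ => sq_nonneg _)
    calc ∑ j : Fin N, (m j d) ^ 2 ≤ ∑ j : Fin N, (W ^ (p - 1)) ^ 2 * (z (rho N j i₀)) ^ 2 :=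
          Finset.sum_le_sum fun j _ => hpick j
      _ = (W ^ (p - 1)) ^ 2 * ∑ j : Fin N, (z (rho N j i₀)) ^ 2 := by rw [Finset.mul_sum]
      _ ≤ (W ^ (p - 1)) ^ 2 * W ^ 2 :=
          mul_le_mul_of_nonneg_left hsumz (sq_nonneg _)
      _ = W ^ (2 * p) := by
          rw [← pow_mul, ← pow_add]
          congr 1
          omega
  -- combine
  calc ∑ j : Fin N, (eval (z ∘ rho N j) f) ^ 2
      ≤ ∑ j : Fin N, (pnorm 1 f) * ∑ d ∈ f.support, |f.coeff d| * (m j d) ^ 2 :=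
        Finset.sum_le_sum fun j _ => step2 j
    _ = (pnorm 1 f) * ∑ d ∈ f.support, |f.coeff d| * ∑ j : Fin N, (m j d) ^ 2 := by
        rw [← Finset.mul_sum]
        congr 1
        rw [Finset.sum_comm]
        apply Finset.sum_congr rfl
        intro d _
        rw [Finset.mul_sum]
    _ ≤ (pnorm 1 f) * ∑ d ∈ f.support, |f.coeff d| * W ^ (2 * p) := by
        apply mul_le_mul_of_nonneg_left _ (pnorm_nonneg zero_le_one f)
        exact Finset.sum_le_sum fun d hd =>
          mul_le_mul_of_nonneg_left (step3 d hd) (abs_nonneg _)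
    _ = (pnorm 1 f) ^ 2 * W ^ (2 * p) := by
        rw [← Finset.sum_mul, ← pnorm_one, sq]
        ring

section XvecBounds

variable {N : ℕ} [NeZero N] (χ : MvPolynomial (Idx N) ℝ)

lemma hamNorm_nonneg (R : ℝ) (hR : 0 ≤ R) (F : MvPolynomial (Idx N) ℝ) :
    0 ≤ hamNorm N R F :=
  add_nonneg (pnorm_nonneg hR _) (pnorm_nonneg hR _)

lemma Xvec_oplus_inl (z : Idx N → ℝ) (j : Fin N) :
    Xvec N (oplus N χ) z (Sum.inl j) = eval (z ∘ rho N j) (pderiv (Sum.inr 0) (oplus N χ)) := by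
  show eval z (pderiv (Sum.inr j) (oplus N χ)) = _
  have h0 : Sum.inr j = rho N j (Sum.inr (0 : Fin N)) := by simp [rho]
  rw [h0, pderiv_oplus_shift, eval_rename]

lemma Xvec_oplus_inr (z : Idx N → ℝ) (j : Fin N) :
    Xvec N (oplus N χ) z (Sum.inr j) = -eval (z ∘ rho N j) (pderiv (Sum.inl 0) (oplus N χ)) := by
  show -eval z (pderiv (Sum.inl j) (oplus N χ)) = _
  have h0 : Sum.inl j = rho N j (Sum.inl (0 : Fin N)) := by simp [rho]
  rw [h0, pderiv_oplus_shift, eval_rename]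

lemma hamNorm_scale {p : ℕ} (hX : (oplus N χ).IsHomogeneous (p + 1)) (R : ℝ) :
    hamNorm N R (oplus N χ) = hamNorm N 1 (oplus N χ) * R ^ p := by
  have hg : (pderiv (Sum.inr (0 : Fin N)) (oplus N χ)).IsHomogeneous p :=
    isHomogeneous_pderiv _ _ _ hX
  have hh : (-pderiv (Sum.inl (0 : Fin N)) (oplus N χ)).IsHomogeneous p :=
    (isHomogeneous_pderiv _ _ _ hX).neg
  rw [hamNorm, hamNorm, pnorm_scale hg, pnorm_scale hh]
  ring

lemma xvec_sup_bound {p : ℕ} (hX : (oplus N χ).IsHomogeneous (p + 1)) (z : Idx N → ℝ) :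
    ‖Xvec N (oplus N χ) z‖ ≤ hamNorm N 1 (oplus N χ) * ‖z‖ ^ p := by
  have hg : (pderiv (Sum.inr (0 : Fin N)) (oplus N χ)).IsHomogeneous p :=
    isHomogeneous_pderiv _ _ _ hX
  have hh : (pderiv (Sum.inl (0 : Fin N)) (oplus N χ)).IsHomogeneous p :=
    isHomogeneous_pderiv _ _ _ hX
  have hz0 : (0:ℝ) ≤ ‖z‖ := norm_nonneg z
  have hC : 0 ≤ hamNorm N 1 (oplus N χ) * ‖z‖ ^ p :=
    mul_nonneg (hamNorm_nonneg 1 zero_le_one _) (pow_nonneg hz0 p)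
  rw [pi_norm_le_iff_of_nonneg hC]
  intro l
  have hW : ∀ (j : Fin N) (i : Idx N), |(z ∘ rho N j) i| ≤ ‖z‖ := by
    intro j i
    simpa [Real.norm_eq_abs] using norm_le_pi_norm z (rho N j i)
  have hA : 0 ≤ pnorm 1 (pderiv (Sum.inr (0 : Fin N)) (oplus N χ)) := pnorm_nonneg zero_le_one _
  have hB : 0 ≤ pnorm 1 (-pderiv (Sum.inl (0 : Fin N)) (oplus N χ)) := pnorm_nonneg zero_le_one _
  cases l with
  | inl j =>
    rw [Real.norm_eq_abs, Xvec_oplus_inl]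
    refine (abs_eval_le hg (hW j) hz0).trans ?_
    rw [hamNorm]
    nlinarith [pow_nonneg hz0 p]
  | inr j =>
    rw [Real.norm_eq_abs, Xvec_oplus_inr, abs_neg]
    refine (abs_eval_le hh (hW j) hz0).trans ?_
    rw [hamNorm, pnorm_neg]
    nlinarith [pow_nonneg hz0 p]

lemma xvec_enorm_bound {p : ℕ} (hp : 1 ≤ p) (hX : (oplus N χ).IsHomogeneous (p + 1))
    (z : Idx N → ℝ) :
    enorm₂ (Xvec N (oplus N χ) z) ≤ hamNorm N 1 (oplus N χ) * (enorm₂ z) ^ p := by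
  have hg : (pderiv (Sum.inr (0 : Fin N)) (oplus N χ)).IsHomogeneous p :=
    isHomogeneous_pderiv _ _ _ hX
  have hh : (pderiv (Sum.inl (0 : Fin N)) (oplus N χ)).IsHomogeneous p :=
    isHomogeneous_pderiv _ _ _ hX
  set A := pnorm 1 (pderiv (Sum.inr (0 : Fin N)) (oplus N χ)) with hAdef
  set B := pnorm 1 (pderiv (Sum.inl (0 : Fin N)) (oplus N χ)) with hBdef
  have hA : 0 ≤ A := pnorm_nonneg zero_le_one _
  have hB : 0 ≤ B := pnorm_nonneg zero_le_one _
  set W := enorm₂ z with hWdef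
  have hW0 : 0 ≤ W := enorm_nonneg z
  have hham : hamNorm N 1 (oplus N χ) = A + B := by
    rw [hamNorm, pnorm_neg]
  have hsum : ∑ l, (Xvec N (oplus N χ) z l) ^ 2 ≤ (A + B) ^ 2 * W ^ (2 * p) := by
    rw [Fintype.sum_sum_type (fun l => (Xvec N (oplus N χ) z l) ^ 2)]
    have h1 : ∑ j : Fin N, (Xvec N (oplus N χ) z (Sum.inl j)) ^ 2 ≤ A ^ 2 * W ^ (2 * p) := by
      calc ∑ j : Fin N, (Xvec N (oplus N χ) z (Sum.inl j)) ^ 2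
          = ∑ j : Fin N, (eval (z ∘ rho N j) (pderiv (Sum.inr 0) (oplus N χ))) ^ 2 := by
            apply Finset.sum_congr rfl; intro j _; rw [Xvec_oplus_inl]
        _ ≤ A ^ 2 * W ^ (2 * p) := sum_sq_shift_le hp hg z
    have h2 : ∑ j : Fin N, (Xvec N (oplus N χ) z (Sum.inr j)) ^ 2 ≤ B ^ 2 * W ^ (2 * p) := by
      calc ∑ j : Fin N, (Xvec N (oplus N χ) z (Sum.inr j)) ^ 2
          = ∑ j : Fin N, (eval (z ∘ rho N j) (pderiv (Sum.inl 0) (oplus N χ))) ^ 2 := by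
            apply Finset.sum_congr rfl; intro j _; rw [Xvec_oplus_inr]; ring
        _ ≤ B ^ 2 * W ^ (2 * p) := sum_sq_shift_le hp hh z
    have hAB : A ^ 2 * W ^ (2 * p) + B ^ 2 * W ^ (2 * p) ≤ (A + B) ^ 2 * W ^ (2 * p) := by
      have h3 : (0:ℝ) ≤ W ^ (2 * p) := pow_nonneg hW0 _
      nlinarith [mul_nonneg (mul_nonneg hA hB) h3]
    linarith
  rw [enorm₂, hham]
  calc Real.sqrt (∑ l, (Xvec N (oplus N χ) z l) ^ 2)
      ≤ Real.sqrt ((A + B) ^ 2 * W ^ (2 * p)) := Real.sqrt_le_sqrt hsum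
    _ = (A + B) * W ^ p := by
        rw [show (A + B) ^ 2 * W ^ (2 * p) = ((A + B) * W ^ p) ^ 2 by
          rw [mul_pow, ← pow_mul]; ring_nf]
        exact Real.sqrt_sq (mul_nonneg (add_nonneg hA hB) (pow_nonneg hW0 p))

end XvecBounds

section ODE
open Set


lemma flow_est_aux {E : Type*} [NormedAddCommGroup E] [NormedSpace ℝ E]
    (X : E → E) (p : ℕ) (K R' δ : ℝ) (hK : 0 ≤ K) (hδ : 0 < δ) (hδR : δ < R')
    (hX : ∀ z : E, ‖z‖ ≤ R' → ‖X z‖ ≤ K * ‖z‖ ^ p)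
    (hc : K * R' ^ p < δ / Real.exp 1)
    (u : ℝ → E) (hu : ∀ τ : ℝ, |τ| ≤ 1 → HasDerivAt u (X (u τ)) τ)
    (h0 : ‖u 0‖ ≤ R' - δ) (t : ℝ) (ht : t ∈ Set.Icc (0:ℝ) 1) :
    ‖u t - u 0‖ ≤ (1 / (1 - Real.exp 1 / δ * (K * R' ^ p))) * K * ‖u 0‖ ^ p := by
  have hR' : 0 < R' := hδ.trans hδR
  set C := K * R' ^ p with hCdef
  set a := ‖u 0‖ with hadef
  have ha0 : 0 ≤ a := norm_nonneg _
  have hexp1 : (1:ℝ) ≤ Real.exp 1 := by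
    have := Real.add_one_le_exp (1:ℝ); linarith
  have hexp0 : (0:ℝ) < Real.exp 1 := Real.exp_pos 1
  have hC0 : 0 ≤ C := mul_nonneg hK (pow_nonneg hR'.le p)
  have hde : 0 < δ / Real.exp 1 := div_pos hδ hexp0
  have hdeδ : δ / Real.exp 1 ≤ δ := by
    rw [div_le_iff₀ hexp0]; nlinarith
  set c := Real.exp 1 / δ * C with hcdef
  have hc0 : 0 ≤ c := mul_nonneg (div_nonneg hexp0.le hδ.le) hC0
  have hc1 : c < 1 := by
    have h1 : Real.exp 1 / δ * C < Real.exp 1 / δ * (δ / Real.exp 1) :=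
      mul_lt_mul_of_pos_left hc (div_pos hexp0 hδ)
    have h2 : Real.exp 1 / δ * (δ / Real.exp 1) = 1 := by
      field_simp
    linarith
  have h1c : 0 < 1 - c := by linarith
  have huτ : ∀ τ ∈ Icc (0:ℝ) 1, HasDerivAt u (X (u τ)) τ := by
    intro τ hτ
    exact hu τ (by rw [abs_le]; constructor <;> linarith [hτ.1, hτ.2])
  -- Step A : on [0,1], ‖u τ - u 0‖ ≤ C * τ
  have stepA : ∀ τ ∈ Icc (0:ℝ) 1, ‖u τ - u 0‖ ≤ C * τ := by
    set S : Set ℝ := {r | r ∈ Icc (0:ℝ) 1 ∧ ∀ τ ∈ Icc (0:ℝ) r, ‖u τ - u 0‖ ≤ C * τ} with hSdef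
    have h0S : (0:ℝ) ∈ S := by
      refine ⟨⟨le_refl 0, zero_le_one⟩, ?_⟩
      intro τ hτ
      have : τ = 0 := le_antisymm hτ.2 hτ.1
      simp [this]
    have hSbdd : BddAbove S := ⟨1, fun r hr => hr.1.2⟩
    have hSne : S.Nonempty := ⟨0, h0S⟩
    set T := sSup S with hTdef
    have hT0 : 0 ≤ T := le_csSup hSbdd h0S
    have hT1 : T ≤ 1 := csSup_le hSne fun r hr => hr.1.2
    have hTS : T ∈ S := by
      refine ⟨⟨hT0, hT1⟩, ?_⟩
      intro τ hτ
      rcases lt_or_eq_of_le hτ.2 with hlt | heq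
      · obtain ⟨r, hrS, hτr⟩ := exists_lt_of_lt_csSup hSne hlt
        exact hrS.2 τ ⟨hτ.1, hτr.le⟩
      · -- τ = T; use continuity
        rcases eq_or_lt_of_le hτ.1 with h0τ | h0τ
        · simp [← h0τ]
        · -- τ > 0
          have hcont : ContinuousAt (fun σ => ‖u σ - u 0‖) τ := by
            have : ContinuousAt u τ :=
              (huτ τ ⟨hτ.1, hτ.2.trans hT1⟩).continuousAt
            exact (this.sub continuousAt_const).norm
          have hev : ∀ᶠ σ in nhdsWithin τ (Iio τ), ‖u σ - u 0‖ ≤ C * σ := by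
            have hmem : ∀ᶠ σ in nhdsWithin τ (Iio τ), σ ∈ Ioi (0:ℝ) :=
              eventually_nhdsWithin_of_eventually_nhds (isOpen_Ioi.eventually_mem h0τ)
            have hmem2 : ∀ᶠ σ in nhdsWithin τ (Iio τ), σ ∈ Iio τ :=
              eventually_mem_nhdsWithin
            filter_upwards [hmem, hmem2] with σ h1 h2
            obtain ⟨r, hrS, hσr⟩ := exists_lt_of_lt_csSup hSne (lt_of_lt_of_le h2 hτ.2)
            exact hrS.2 σ ⟨le_of_lt h1, hσr.le⟩
          have htend : Filter.Tendsto (fun σ => ‖u σ - u 0‖) (nhdsWithin τ (Iio τ))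
              (nhds (‖u τ - u 0‖)) := hcont.continuousWithinAt.tendsto
          have htend2 : Filter.Tendsto (fun σ => C * σ) (nhdsWithin τ (Iio τ))
              (nhds (C * τ)) :=
            ((continuous_const.mul continuous_id).tendsto τ).mono_left nhdsWithin_le_nhds
          exact le_of_tendsto_of_tendsto htend htend2 hev
    have hText : T = 1 := by
      by_contra hne
      have hTlt : T < 1 := lt_of_le_of_ne hT1 hne
      -- u stays strictly inside the ball of radius R' up to T
      have hballT : ∀ τ ∈ Icc (0:ℝ) T, ‖u τ‖ ≤ R' - δ + C := by
        intro τ hτm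
        calc ‖u τ‖ ≤ ‖u 0‖ + ‖u τ - u 0‖ := by
              have := norm_add_le (u 0) (u τ - u 0); simpa using this
          _ ≤ (R' - δ) + C * τ := add_le_add h0 (hTS.2 τ hτm)
          _ ≤ R' - δ + C := by
              have hCτ : C * τ ≤ C * 1 := by
                apply mul_le_mul_of_nonneg_left _ hC0
                exact hτm.2.trans hT1
              linarith
      have hCδ : C < δ := lt_of_lt_of_le hc hdeδ
      have hcontu : ContinuousAt u T := (huτ T ⟨hT0, hT1⟩).continuousAt
      rw [Metric.continuousAt_iff] at hcontu
      obtain ⟨ε, hε0, hε⟩ := hcontu (δ - C) (by linarith)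
      set T' := min 1 (T + ε / 2) with hT'def
      have hTT' : T < T' := by
        apply lt_min hTlt; linarith
      have hT'1 : T' ≤ 1 := min_le_left _ _
      have hT'0 : 0 ≤ T' := hT0.trans hTT'.le
      have hball' : ∀ x ∈ Icc (0:ℝ) T', ‖u x‖ ≤ R' := by
        intro x hx
        rcases le_or_gt x T with hxT | hxT
        · have := hballT x ⟨hx.1, hxT⟩; linarith
        · have hd : dist x T < ε := by
            rw [Real.dist_eq, abs_lt]
            constructor
            · linarith
            · have : x ≤ T + ε / 2 := hx.2.trans (min_le_right _ _)
              linarith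
          have h1 := hε hd
          rw [dist_eq_norm] at h1
          have h2 : ‖u T‖ ≤ R' - δ + C := hballT T ⟨hT0, le_refl T⟩
          calc ‖u x‖ ≤ ‖u T‖ + ‖u x - u T‖ := by
                have := norm_add_le (u T) (u x - u T); simpa using this
            _ ≤ (R' - δ + C) + (δ - C) := by
                apply add_le_add h2 h1.le
            _ = R' := by ring
      have hder : ∀ x ∈ Icc (0:ℝ) T', HasDerivWithinAt u (X (u x)) (Icc (0:ℝ) T') x :=
        fun x hx => (huτ x ⟨hx.1, hx.2.trans hT'1⟩).hasDerivWithinAt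
      have hbound : ∀ x ∈ Ico (0:ℝ) T', ‖X (u x)‖ ≤ C := by
        intro x hx
        have h1 := hX (u x) (hball' x ⟨hx.1, hx.2.le⟩)
        refine h1.trans ?_
        rw [hCdef]
        apply mul_le_mul_of_nonneg_left _ hK
        exact pow_le_pow_left₀ (norm_nonneg _) (hball' x ⟨hx.1, hx.2.le⟩) p
      have hMVT := norm_image_sub_le_of_norm_deriv_le_segment' hder hbound
      have hT'S : T' ∈ S := by
        refine ⟨⟨hT'0, hT'1⟩, ?_⟩
        intro τ hτm
        have := hMVT τ ⟨hτm.1, hτm.2⟩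
        simpa using this
      have : T' ≤ T := le_csSup hSbdd hT'S
      linarith
    intro τ hτ
    exact (hText ▸ hTS).2 τ hτ
  -- Step B : the refined estimate
  have hgc : ContinuousOn (fun τ => ‖u τ - u 0‖) (Icc 0 t) := by
    intro τ hτ
    have : ContinuousAt u τ :=
      (huτ τ ⟨hτ.1, hτ.2.trans ht.2⟩).continuousAt
    exact ((this.sub continuousAt_const).norm).continuousWithinAt
  obtain ⟨τs, hτsmem, hmax⟩ :=
    isCompact_Icc.exists_isMaxOn (nonempty_Icc.mpr ht.1) hgc
  set M := ‖u τs - u 0‖ with hMdef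
  have hM0 : 0 ≤ M := norm_nonneg _
  have hτs1 : τs ∈ Icc (0:ℝ) 1 := ⟨hτsmem.1, hτsmem.2.trans ht.2⟩
  have hMC : M ≤ C := by
    have := stepA τs hτs1
    have h2 : C * τs ≤ C * 1 := mul_le_mul_of_nonneg_left hτs1.2 hC0
    linarith
  have hMde : M < δ / Real.exp 1 := lt_of_le_of_lt hMC hc
  have haM : a + M ≤ R' := by
    have : M ≤ δ := hMde.le.trans hdeδ
    linarith
  have hball : ∀ σ ∈ Icc (0:ℝ) τs, ‖u σ‖ ≤ a + M := by
    intro σ hσ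
    have hσt : σ ∈ Icc 0 t := ⟨hσ.1, hσ.2.trans hτsmem.2⟩
    calc ‖u σ‖ ≤ ‖u 0‖ + ‖u σ - u 0‖ := by
          have := norm_add_le (u 0) (u σ - u 0); simpa using this
      _ ≤ a + M := add_le_add (le_refl a) (hmax hσt)
  -- MVT on [0, τs] with derivative bound K (a+M)^p
  have hKM : M ≤ K * (a + M) ^ p := by
    have hder : ∀ x ∈ Icc (0:ℝ) τs, HasDerivWithinAt u (X (u x)) (Icc (0:ℝ) τs) x :=
      fun x hx => (huτ x ⟨hx.1, hx.2.trans hτs1.2⟩).hasDerivWithinAt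
    have hbound : ∀ x ∈ Ico (0:ℝ) τs, ‖X (u x)‖ ≤ K * (a + M) ^ p := by
      intro x hx
      have h1 := hX (u x) ((hball x ⟨hx.1, hx.2.le⟩).trans haM)
      refine h1.trans ?_
      apply mul_le_mul_of_nonneg_left _ hK
      exact pow_le_pow_left₀ (norm_nonneg _) (hball x ⟨hx.1, hx.2.le⟩) p
    have hMVT := norm_image_sub_le_of_norm_deriv_le_segment' hder hbound τs
      ⟨hτsmem.1, le_refl τs⟩
    have hpos : 0 ≤ K * (a + M) ^ p := mul_nonneg hK (pow_nonneg (by linarith) p)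
    have : K * (a + M) ^ p * (τs - 0) ≤ K * (a + M) ^ p * 1 := by
      apply mul_le_mul_of_nonneg_left _ hpos
      linarith [hτs1.2]
    calc M ≤ K * (a + M) ^ p * (τs - 0) := hMVT
      _ ≤ K * (a + M) ^ p := by linarith
  -- convexity estimate
  have hconv : (a + M) ^ p ≤ a ^ p + Real.exp 1 / δ * R' ^ p * M := by
    set h := δ / Real.exp 1 with hhdef
    set θ := M / h with hθdef
    have hθ0 : 0 ≤ θ := div_nonneg hM0 hde.le
    have hθ1 : θ ≤ 1 := by
      rw [div_le_one hde]; exact hMde.le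
    have hcomb := (convexOn_pow p).2 (Set.mem_Ici.mpr ha0)
      (Set.mem_Ici.mpr (by linarith : (0:ℝ) ≤ a + h))
      (by linarith : (0:ℝ) ≤ 1 - θ) hθ0 (by ring)
    have hθh : θ * h = M := div_mul_cancel₀ M (ne_of_gt hde)
    have hpt : (1 - θ) • a + θ • (a + h) = a + M := by
      simp only [smul_eq_mul]
      linear_combination hθh
    rw [hpt] at hcomb
    simp only [smul_eq_mul] at hcomb
    have h2 : (1 - θ) * a ^ p + θ * (a + h) ^ p ≤ a ^ p + θ * (a + h) ^ p := by
      nlinarith [pow_nonneg ha0 p]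
    have h3 : θ * (a + h) ^ p ≤ θ * R' ^ p := by
      apply mul_le_mul_of_nonneg_left _ hθ0
      apply pow_le_pow_left₀ (by linarith)
      linarith
    have h4 : θ * R' ^ p = Real.exp 1 / δ * R' ^ p * M := by
      rw [hθdef, hhdef]
      field_simp
    linarith
  -- conclude
  have hfin : M * (1 - c) ≤ K * a ^ p := by
    have h5 : M ≤ K * a ^ p + c * M := by
      calc M ≤ K * (a + M) ^ p := hKM
        _ ≤ K * (a ^ p + Real.exp 1 / δ * R' ^ p * M) :=
            mul_le_mul_of_nonneg_left hconv hK
        _ = K * a ^ p + c * M := by rw [hcdef, hCdef]; ring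
    nlinarith
  have hgt : ‖u t - u 0‖ ≤ M := hmax ⟨ht.1, le_refl t⟩
  have : M ≤ 1 / (1 - c) * K * a ^ p := by
    rw [one_div, mul_assoc, ← div_eq_inv_mul, le_div_iff₀ h1c]
    linarith [hfin]
  linarith

lemma flow_est {E : Type*} [NormedAddCommGroup E] [NormedSpace ℝ E]
    (X : E → E) (p : ℕ) (K R' δ : ℝ) (hK : 0 ≤ K) (hδ : 0 < δ) (hδR : δ < R')
    (hX : ∀ z : E, ‖z‖ ≤ R' → ‖X z‖ ≤ K * ‖z‖ ^ p)
    (hc : K * R' ^ p < δ / Real.exp 1)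
    (u : ℝ → E) (hu : ∀ τ : ℝ, |τ| ≤ 1 → HasDerivAt u (X (u τ)) τ)
    (h0 : ‖u 0‖ ≤ R' - δ) (t : ℝ) (ht : |t| ≤ 1) :
    ‖u t - u 0‖ ≤ (1 / (1 - Real.exp 1 / δ * (K * R' ^ p))) * K * ‖u 0‖ ^ p := by
  rcases le_or_gt 0 t with h0t | h0t
  · exact flow_est_aux X p K R' δ hK hδ hδR hX hc u hu h0 t
      ⟨h0t, by rwa [abs_of_nonneg h0t] at ht⟩
  · set v : ℝ → E := fun τ => u (-τ) with hvdef
    set Y : E → E := fun z => -(X z) with hYdef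
    have hv : ∀ τ : ℝ, |τ| ≤ 1 → HasDerivAt v (Y (v τ)) τ := by
      intro τ hτ
      have h1 := hu (-τ) (by rwa [abs_neg])
      have h2 : HasDerivAt (fun σ : ℝ => -σ) (-1) τ := by
        simpa using (hasDerivAt_neg τ)
      have h3 := h1.scomp τ h2
      simpa [hvdef, hYdef, Function.comp_def] using h3
    have hY : ∀ z : E, ‖z‖ ≤ R' → ‖Y z‖ ≤ K * ‖z‖ ^ p := by
      intro z hz
      rw [hYdef]; rw [norm_neg]; exact hX z hz
    have hv0 : v 0 = u 0 := by simp [hvdef]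
    have := flow_est_aux Y p K R' δ hK hδ hδR hY hc v hv (by rwa [hv0]) (-t)
      ⟨by linarith, by rw [abs_of_neg h0t] at ht; linarith⟩
    rw [hv0] at this
    simpa [hvdef] using this

end ODE

/-- Let `𝒳 = χ^⊕` be cyclically symmetric homogeneous of degree
`2s+2` (`s ≥ 1`) and let `T^t` be the time-`t` flow of `X_𝒳` (encoded below by curves
`u` with `u̇(τ) = X_𝒳(u(τ))` for `|τ| ≤ 1`).  If `0 < δ < R'` and `|X_𝒳|_{R'} < δ/e`,
then `c := (e/δ)|X_𝒳|_{R'} < 1` and for `|t| ≤ 1`, `‖z‖ ≤ R' − δ` one has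
`‖T^t(z) − z‖ ≤ (1/(1−c)) |X_𝒳|₁ ‖z‖^{2s+1}`; this holds both for the supremum (`ℓ^∞`)
and the euclidean (`ℓ²`) norm. -/
theorem flow_deformation_estimate (N : ℕ) [NeZero N]
    (s : ℕ) (hs : 1 ≤ s) (χ : MvPolynomial (Idx N) ℝ)
    (hχ : χ.IsHomogeneous (2 * s + 2))
    (R' δ : ℝ) (hδ : 0 < δ) (hδR : δ < R')
    (hsmall : hamNorm N R' (oplus N χ) < δ / Real.exp 1) :
    (Real.exp 1 / δ) * hamNorm N R' (oplus N χ) < 1 ∧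
    (∀ (u : ℝ → Idx N → ℝ),
        (∀ τ : ℝ, |τ| ≤ 1 → HasDerivAt u (Xvec N (oplus N χ) (u τ)) τ) →
        ‖u 0‖ ≤ R' - δ →
        ∀ t : ℝ, |t| ≤ 1 →
          ‖u t - u 0‖ ≤
            (1 / (1 - (Real.exp 1 / δ) * hamNorm N R' (oplus N χ))) *
              hamNorm N 1 (oplus N χ) * ‖u 0‖ ^ (2 * s + 1)) ∧
    (∀ (u : ℝ → Idx N → ℝ),
        (∀ τ : ℝ, |τ| ≤ 1 → HasDerivAt u (Xvec N (oplus N χ) (u τ)) τ) →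
        enorm₂ (u 0) ≤ R' - δ →
        ∀ t : ℝ, |t| ≤ 1 →
          enorm₂ (u t - u 0) ≤
            (1 / (1 - (Real.exp 1 / δ) * hamNorm N R' (oplus N χ))) *
              hamNorm N 1 (oplus N χ) * enorm₂ (u 0) ^ (2 * s + 1)) := by
  classical
  have hhom : (oplus N χ).IsHomogeneous ((2 * s + 1) + 1) := by
    have h1 := isHomogeneous_oplus N χ (2 * s + 2) hχ
    have : 2 * s + 2 = (2 * s + 1) + 1 := by omega
    rwa [this] at h1
  set K := hamNorm N 1 (oplus N χ) with hKdef
  have hK0 : 0 ≤ K := hamNorm_nonneg 1 zero_le_one _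
  have hscale : hamNorm N R' (oplus N χ) = K * R' ^ (2 * s + 1) :=
    hamNorm_scale χ hhom R'
  have hc : K * R' ^ (2 * s + 1) < δ / Real.exp 1 := by rw [← hscale]; exact hsmall
  refine ⟨?_, ?_, ?_⟩
  · rw [hscale]
    have hexp0 : (0:ℝ) < Real.exp 1 := Real.exp_pos 1
    have h1 : Real.exp 1 / δ * (K * R' ^ (2 * s + 1)) <
        Real.exp 1 / δ * (δ / Real.exp 1) :=
      mul_lt_mul_of_pos_left hc (div_pos hexp0 hδ)
    have h2 : Real.exp 1 / δ * (δ / Real.exp 1) = 1 := by field_simp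
    linarith
  · intro u hu h0 t ht
    rw [hscale]
    exact flow_est (Xvec N (oplus N χ)) (2 * s + 1) K R' δ hK0 hδ hδR
      (fun z _ => xvec_sup_bound χ hhom z) hc u hu h0 t ht
  · intro u hu h0 t ht
    rw [hscale]
    set L := (EuclideanSpace.equiv (Idx N) ℝ).symm with hLdef
    have hLnorm : ∀ z : Idx N → ℝ, ‖L z‖ = enorm₂ z := by
      intro z
      rw [EuclideanSpace.norm_eq, enorm₂]
      congr 1
      apply Finset.sum_congr rfl
      intro l _
      simp [hLdef, Real.norm_eq_abs, sq_abs]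
    have hXY : ∀ w : EuclideanSpace ℝ (Idx N), ‖w‖ ≤ R' →
        ‖L (Xvec N (oplus N χ) (L.symm w))‖ ≤ K * ‖w‖ ^ (2 * s + 1) := by
      intro w _
      calc ‖L (Xvec N (oplus N χ) (L.symm w))‖
          = enorm₂ (Xvec N (oplus N χ) (L.symm w)) := hLnorm _
        _ ≤ K * (enorm₂ (L.symm w)) ^ (2 * s + 1) :=
            xvec_enorm_bound χ (by omega) hhom _
        _ = K * ‖w‖ ^ (2 * s + 1) := by
            rw [← hLnorm (L.symm w), L.apply_symm_apply]
    have hv : ∀ τ : ℝ, |τ| ≤ 1 → HasDerivAt (fun t => L (u t))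
        ((fun w => L (Xvec N (oplus N χ) (L.symm w))) ((fun t => L (u t)) τ)) τ := by
      intro τ hτ
      have h1 := L.toContinuousLinearMap.hasFDerivAt.comp_hasDerivAt τ (hu τ hτ)
      exact h1
    have h0' : ‖(fun t => L (u t)) 0‖ ≤ R' - δ := by
      simpa [hLnorm (u 0)] using h0
    have final := flow_est (E := EuclideanSpace ℝ (Idx N))
      (fun w => L (Xvec N (oplus N χ) (L.symm w))) (2 * s + 1) K R' δ hK0 hδ hδR
      hXY hc (fun t => L (u t)) hv h0' t ht
    rw [← map_sub, hLnorm, hLnorm] at final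
    exact final
end

section
/- Let 𝒳 = χ^⊕ with χ a homogeneous polynomial of degree r+1 (r ≥ 1) and F = f^⊕ with f a homogeneous polynomial of degree s+1 (s ≥ 1), both cyclically symmetric functions on ℝ^N × ℝ^N, and let L_𝒳 Y(z) := dY(z)[X_𝒳(z)] denote the Lie derivative of a vector field Y along X_𝒳. Then for every integer p ≥ 1 and every z ∈ ℝ^{2N} one has ‖(L_𝒳^p X_F)(z)‖ ≤ (Π_{j=0}^{p−1} [s + j(r−1)]) · |X_F|_1 · (|X_𝒳|_1)^p · ‖z‖^{s+p(r−1)}, where ‖·‖ is either the Euclidean (ℓ²) or the supremum (ℓ^∞) norm on ℝ^{2N}. -/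
open MvPolynomial Finset Real

/-- the euclidean (`ℓ²`) norm on `ℝ^{2N}`; the supremum (`ℓ^∞`) norm is the `Pi` norm `‖·‖`. -/
noncomputable def euclNorm {N : ℕ} (z : Idx N → ℝ) : ℝ :=
  Real.sqrt (∑ l, z l ^ 2)

/-- the Lie derivative of a vector field `Y` along the vector field `V`:
`(L_V Y)(z) = dY(z)[V(z)]`. -/
noncomputable def lieD {N : ℕ} (V : (Idx N → ℝ) → (Idx N → ℝ)) :
    ((Idx N → ℝ) → (Idx N → ℝ)) → ((Idx N → ℝ) → (Idx N → ℝ)) :=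
  fun Y z => fderiv ℝ Y z (V z)

/-! ### auxiliary: the coefficient `ℓ¹`-norm `P1` -/

noncomputable def P1 {σ : Type*} (q : MvPolynomial σ ℝ) : ℝ := ∑ d ∈ q.support, |q.coeff d|

lemma P1_nonneg {σ : Type*} (q : MvPolynomial σ ℝ) : 0 ≤ P1 q :=
  Finset.sum_nonneg fun _ _ => abs_nonneg _

lemma P1_eq_sum {σ : Type*} (q : MvPolynomial σ ℝ) (t : Finset (σ →₀ ℕ)) (ht : q.support ⊆ t) :
    P1 q = ∑ d ∈ t, |q.coeff d| := by
  refine Finset.sum_subset ht fun d _ hd => ?_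
  simp [MvPolynomial.notMem_support_iff.mp hd]

lemma P1_zero {σ : Type*} : P1 (0 : MvPolynomial σ ℝ) = 0 := by simp [P1]

lemma P1_neg {σ : Type*} (q : MvPolynomial σ ℝ) : P1 (-q) = P1 q := by
  simp [P1, MvPolynomial.support_neg]

lemma P1_add_le {σ : Type*} (a b : MvPolynomial σ ℝ) : P1 (a + b) ≤ P1 a + P1 b := by
  classical
  rw [P1_eq_sum (a+b) (a.support ∪ b.support) (MvPolynomial.support_add),
    P1_eq_sum a (a.support ∪ b.support) Finset.subset_union_left,
    P1_eq_sum b (a.support ∪ b.support) Finset.subset_union_right, ← Finset.sum_add_distrib]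
  exact Finset.sum_le_sum fun d _ => by simpa [MvPolynomial.coeff_add] using abs_add_le _ _

lemma P1_sum_le {σ ι : Type*} (t : Finset ι) (f : ι → MvPolynomial σ ℝ) :
    P1 (∑ i ∈ t, f i) ≤ ∑ i ∈ t, P1 (f i) := by
  classical
  induction t using Finset.induction_on with
  | empty => simp [P1_zero]
  | insert a s h ih =>
    rw [Finset.sum_insert h, Finset.sum_insert h]
    exact (P1_add_le _ _).trans (by linarith)

lemma P1_monomial_le {σ : Type*} (u : σ →₀ ℕ) (c : ℝ) : P1 (monomial u c) ≤ |c| := by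
  classical
  rcases eq_or_ne c 0 with h | h
  · simp [h, P1_zero]
  · simp [P1, MvPolynomial.support_monomial, h]

lemma P1_monomial_mul_le {σ : Type*} (u : σ →₀ ℕ) (c : ℝ) (b : MvPolynomial σ ℝ) :
    P1 (monomial u c * b) ≤ |c| * P1 b := by
  classical
  have hsupp : (monomial u c * b).support ⊆ b.support.map (addLeftEmbedding u) := by
    refine (MvPolynomial.support_mul _ _).trans ?_
    intro d hd
    rw [Finset.mem_add] at hd
    obtain ⟨x, hx, y, hy, rfl⟩ := hd
    have hx' : x = u := by
      have := MvPolynomial.support_monomial_subset hx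
      simpa using this
    subst hx'
    exact Finset.mem_map.mpr ⟨y, hy, rfl⟩
  rw [show P1 (monomial u c * b) = ∑ d ∈ b.support.map (addLeftEmbedding u),
      |(monomial u c * b).coeff d| from Finset.sum_subset hsupp (fun d _ hd => by
        simp [MvPolynomial.notMem_support_iff.mp hd]), Finset.sum_map]
  rw [P1, Finset.mul_sum]
  refine Finset.sum_le_sum fun e _ => ?_
  have : (monomial u c * b).coeff (addLeftEmbedding u e) = c * b.coeff e := by
    simpa [addLeftEmbedding] using MvPolynomial.coeff_monomial_mul e u c b
  rw [this, abs_mul]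

lemma P1_mul_le {σ : Type*} (a b : MvPolynomial σ ℝ) : P1 (a * b) ≤ P1 a * P1 b := by
  classical
  conv_lhs => rw [← a.support_sum_monomial_coeff, Finset.sum_mul]
  refine (P1_sum_le _ _).trans ?_
  rw [P1, Finset.sum_mul]
  exact Finset.sum_le_sum fun u _ => P1_monomial_mul_le u _ b

lemma P1_rename {σ τ : Type*} (g : σ → τ) (hg : Function.Injective g) (q : MvPolynomial σ ℝ) :
    P1 (rename g q) = P1 q := by
  classical
  rw [P1, P1, MvPolynomial.support_rename_of_injective hg, Finset.sum_image
    (fun a _ b _ h => Finsupp.mapDomain_injective hg h)]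
  exact Finset.sum_congr rfl fun d _ => by rw [MvPolynomial.coeff_rename_mapDomain g hg]

lemma pnorm_one_s18 {N : ℕ} (q : MvPolynomial (Idx N) ℝ) : pnorm 1 q = P1 q := by
  simp [pnorm, P1]

/-! ### homogeneity and derivatives -/

lemma homog_pderiv {σ : Type*} (q : MvPolynomial σ ℝ) (n : ℕ) (h : q.IsHomogeneous (n+1)) (i : σ) :
    (pderiv i q).IsHomogeneous n := by
  classical
  conv_lhs => rw [← q.support_sum_monomial_coeff]
  rw [map_sum]
  refine MvPolynomial.IsHomogeneous.sum _ _ _ fun u hu => ?_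
  rw [pderiv_monomial]
  rcases eq_or_ne (u i) 0 with h0 | h0
  · rw [h0]; simp only [Nat.cast_zero, mul_zero, map_zero]
    exact MvPolynomial.isHomogeneous_zero _ _ _
  · refine MvPolynomial.isHomogeneous_monomial _ ?_
    have hle : Finsupp.single i 1 ≤ u := Finsupp.single_le_iff.mpr (Nat.one_le_iff_ne_zero.mpr h0)
    have hsum : (u - Finsupp.single i 1) + Finsupp.single i 1 = u := tsub_add_cancel_of_le hle
    have hw := congrArg (Finsupp.weight (1 : σ → ℕ)) hsum
    rw [map_add] at hw
    have hu' : Finsupp.weight (1 : σ → ℕ) u = n + 1 := h (MvPolynomial.mem_support_iff.mp hu)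
    have h1 : Finsupp.weight (1 : σ → ℕ) (Finsupp.single i 1) = 1 := by
      simp [Finsupp.weight_apply, Finsupp.sum_single_index]
    rw [Finsupp.degree_eq_weight_one]
    change Finsupp.weight (1 : σ → ℕ) (u - Finsupp.single i 1) = n
    omega

lemma degree_of_mem_support {σ : Type*} {q : MvPolynomial σ ℝ} {n : ℕ} (h : q.IsHomogeneous n)
    {u : σ →₀ ℕ} (hu : u ∈ q.support) : ∑ i ∈ u.support, u i = n := by
  have hd : Finsupp.weight (1 : σ → ℕ) u = n := h (MvPolynomial.mem_support_iff.mp hu)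
  rw [← hd, Finsupp.weight_apply, Finsupp.sum]
  simp only [Pi.one_apply, smul_eq_mul, mul_one]

lemma degree_of_mem_support' {σ : Type*} [Fintype σ] {q : MvPolynomial σ ℝ} {n : ℕ}
    (h : q.IsHomogeneous n) {u : σ →₀ ℕ} (hu : u ∈ q.support) : ∑ i : σ, u i = n := by
  rw [← degree_of_mem_support h hu]
  exact (Finset.sum_subset (Finset.subset_univ _) (fun x _ hx => by
    simpa using Finsupp.notMem_support_iff.mp hx)).symm

lemma sum_P1_pderiv {σ : Type*} [Fintype σ] [DecidableEq σ] (q : MvPolynomial σ ℝ) (n : ℕ)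
    (h : q.IsHomogeneous n) : ∑ l : σ, P1 (pderiv l q) ≤ n * P1 q := by
  classical
  have step : ∀ l : σ, P1 (pderiv l q) ≤ ∑ u ∈ q.support, |q.coeff u| * (u l : ℝ) := by
    intro l
    conv_lhs => rw [← q.support_sum_monomial_coeff, map_sum]
    refine (P1_sum_le _ _).trans (Finset.sum_le_sum fun u _ => ?_)
    rw [pderiv_monomial]
    refine (P1_monomial_le _ _).trans ?_
    rw [abs_mul, Nat.abs_cast]
  refine (Finset.sum_le_sum fun l (_ : l ∈ Finset.univ) => step l).trans ?_
  rw [Finset.sum_comm, P1, Finset.mul_sum]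
  refine Finset.sum_le_sum fun u hu => ?_
  rw [← Finset.mul_sum]
  have : ∑ l : σ, (u l : ℝ) = (n : ℝ) := by
    exact_mod_cast congrArg (Nat.cast : ℕ → ℝ) (degree_of_mem_support' h hu)
  rw [this, mul_comm]

lemma eval_abs_le {σ : Type*} {q : MvPolynomial σ ℝ} {n : ℕ} (h : q.IsHomogeneous n)
    {z : σ → ℝ} {M : ℝ} (hz : ∀ i, |z i| ≤ M) :
    |eval z q| ≤ P1 q * M ^ n := by
  classical
  rw [MvPolynomial.eval_eq, P1, Finset.sum_mul]
  refine (Finset.abs_sum_le_sum_abs _ _).trans (Finset.sum_le_sum fun u hu => ?_)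
  rw [abs_mul, Finset.abs_prod]
  refine mul_le_mul_of_nonneg_left ?_ (abs_nonneg _)
  calc ∏ i ∈ u.support, |z i ^ u i| ≤ ∏ i ∈ u.support, M ^ u i := by
        refine Finset.prod_le_prod (fun _ _ => abs_nonneg _) fun i _ => ?_
        rw [abs_pow]; exact pow_le_pow_left₀ (abs_nonneg _) (hz i) _
    _ = M ^ n := by rw [Finset.prod_pow_eq_pow_sum, degree_of_mem_support h hu]

/-! ### derivative of polynomial maps -/

lemma hasFDerivAt_mveval {σ : Type*} [Fintype σ] [DecidableEq σ] (p : MvPolynomial σ ℝ)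
    (z : σ → ℝ) :
    HasFDerivAt (fun w : σ → ℝ => eval w p)
      (∑ l : σ, eval z (pderiv l p) • (ContinuousLinearMap.proj l :
        (σ → ℝ) →L[ℝ] ℝ)) z := by
  induction p using MvPolynomial.induction_on with
  | C a =>
    simp only [eval_C, pderiv_C, map_zero, zero_smul, Finset.sum_const_zero]
    exact hasFDerivAt_const (a:ℝ) z
  | add p q hp hq =>
    simp only [eval_add, map_add]
    refine (hp.add hq).congr_fderiv (Eq.symm ?_)
    rw [← Finset.sum_add_distrib]
    refine Finset.sum_congr rfl fun l _ => ?_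
    rw [add_smul]
  | mul_X p i hp =>
    have hmul := hp.mul' (hasFDerivAt_apply i z)
    simp only [eval_mul, eval_X]
    refine hmul.congr_fderiv (Eq.symm ?_)
    refine ContinuousLinearMap.ext fun w => ?_
    have hder : ∀ l : σ, pderiv l (p * X i) = pderiv l p * X i + p * C (if i = l then 1 else 0) := by
      intro l
      rw [pderiv_mul, pderiv_X]
      congr 1
      by_cases h : i = l <;> simp [h, Pi.single_apply]
    simp only [ContinuousLinearMap.sum_apply, ContinuousLinearMap.smul_apply,
      ContinuousLinearMap.proj_apply, ContinuousLinearMap.add_apply,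
      ContinuousLinearMap.smulRight_apply, smul_eq_mul]
    have : ∀ l : σ, eval z (pderiv l (p * X i)) =
        eval z (pderiv l p) * z i + eval z p * (if i = l then 1 else 0) := by
      intro l; rw [hder l]; simp only [map_add, eval_mul, eval_X, eval_C]
    simp only [this, add_mul, Finset.sum_add_distrib]
    rw [add_comm]
    congr 1
    · rw [show (∑ l : σ, eval z p * (if i = l then 1 else 0) * w l)
          = ∑ l : σ, if i = l then eval z p * w l else 0 from
        Finset.sum_congr rfl fun l _ => by by_cases h : i = l <;> simp [h]]
      simp
    · rw [op_smul_eq_mul, Finset.sum_mul]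
      exact Finset.sum_congr rfl fun l _ => by ring

/-! ### the cyclic shift -/

section Shift
variable {N : ℕ} [NeZero N]

def shift (a : Fin N) : Idx N → Idx N := Sum.map (· + a) (· + a)

lemma shift_injective (a : Fin N) : Function.Injective (shift (N := N) a) := by
  have h : Function.Injective (fun x : Fin N => x + a) := fun x y h => by
    simpa using congrArg (· - a) h
  exact Function.Injective.sumMap h h

open scoped Fin.IntCast in
lemma tauPow_eq_shift (s : ℤ) (f : MvPolynomial (Idx N) ℝ) :
    tauPow N s f = rename (shift ((s : Fin N))) f := rfl

lemma rename_shift_shift (a b : Fin N) (f : MvPolynomial (Idx N) ℝ) :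
    rename (shift a) (rename (shift b) f) = rename (shift (b + a)) f := by
  rw [MvPolynomial.rename_rename]
  have h : shift a ∘ shift b = shift (N:=N) (b + a) := by
    funext i; cases i <;> simp [shift, add_assoc]
  rw [h]

open scoped Fin.IntCast Fin.NatCast Fin.CommRing in
lemma oplus_eq_sum_shift (f : MvPolynomial (Idx N) ℝ) :
    oplus N f = ∑ a : Fin N, rename (shift a) f := by
  have h1 : oplus N f = ∑ l ∈ Finset.range N, rename (shift ((l : Fin N) + 1)) f := by
    refine Finset.sum_congr rfl fun l _ => ?_
    rw [tauPow_eq_shift]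
    congr 2
    push_cast
    ring
  rw [h1, ← Fin.sum_univ_eq_sum_range (fun l => rename (shift ((l : Fin N) + 1)) f) N]
  simp only [Fin.cast_val_eq_self]
  exact Fintype.sum_equiv (Equiv.addRight 1) _ _ (fun a => rfl)

lemma shift_oplus (t : Fin N) (f : MvPolynomial (Idx N) ℝ) :
    rename (shift t) (oplus N f) = oplus N f := by
  rw [oplus_eq_sum_shift, map_sum]
  simp_rw [rename_shift_shift]
  exact Fintype.sum_equiv (Equiv.addRight t) _ _ (fun a => rfl)

lemma pderiv_shift {a : Fin N} {i : Idx N} {q : MvPolynomial (Idx N) ℝ} :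
    pderiv (shift a i) (rename (shift a) q) = rename (shift a) (pderiv i q) :=
  MvPolynomial.pderiv_rename (shift_injective a) i q

lemma shift_inl (a j : Fin N) : shift a (Sum.inl j) = Sum.inl (j + a) := rfl
lemma shift_inr (a j : Fin N) : shift a (Sum.inr j) = Sum.inr (j + a) := rfl

end Shift

/-! ### polynomial vector fields and the Lie derivative -/

section PVF
variable {N : ℕ} [NeZero N]

noncomputable def pvf (P : Idx N → MvPolynomial (Idx N) ℝ) : (Idx N → ℝ) → (Idx N → ℝ) :=
  fun z i => eval z (P i)

lemma Xvec_eq_pvf (F : MvPolynomial (Idx N) ℝ) :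
    Xvec N F = pvf (Sum.elim (fun j => pderiv (Sum.inr j) F) (fun j => -pderiv (Sum.inl j) F)) := by
  funext z i
  cases i <;> simp [Xvec, pvf]

lemma fderiv_pvf (P : Idx N → MvPolynomial (Idx N) ℝ) (z : Idx N → ℝ) :
    fderiv ℝ (pvf P) z = ContinuousLinearMap.pi (fun i =>
      ∑ l : Idx N, eval z (pderiv l (P i)) • (ContinuousLinearMap.proj l :
        (Idx N → ℝ) →L[ℝ] ℝ)) :=
  (hasFDerivAt_pi.2 fun i => hasFDerivAt_mveval (P i) z).fderiv

lemma lieD_pvf (𝒳 : MvPolynomial (Idx N) ℝ) (P : Idx N → MvPolynomial (Idx N) ℝ) :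
    lieD (Xvec N 𝒳) (pvf P) = pvf (fun i => poisson N (P i) 𝒳) := by
  funext z i
  rw [lieD, fderiv_pvf]
  show (ContinuousLinearMap.pi _) (Xvec N 𝒳 z) i = _
  rw [ContinuousLinearMap.pi_apply]
  simp only [ContinuousLinearMap.sum_apply, ContinuousLinearMap.smul_apply,
    ContinuousLinearMap.proj_apply, smul_eq_mul]
  rw [Fintype.sum_sum_type]
  have hpois : eval z (poisson N (P i) 𝒳) = ∑ j : Fin N,
      (eval z (pderiv (Sum.inl j) (P i)) * eval z (pderiv (Sum.inr j) 𝒳)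
        - eval z (pderiv (Sum.inr j) (P i)) * eval z (pderiv (Sum.inl j) 𝒳)) := by
    rw [poisson, map_sum]
    exact Finset.sum_congr rfl fun j _ => by simp only [map_sub, eval_mul]
  show _ = eval z (poisson N (P i) 𝒳)
  rw [hpois, ← Finset.sum_add_distrib]
  refine Finset.sum_congr rfl fun j _ => ?_
  simp only [Xvec, Sum.elim_inl, Sum.elim_inr]
  ring

end PVF

/-! ### the Poisson bracket operator `g ↦ {g, 𝒳}` -/

section Bracket
variable {N : ℕ} [NeZero N] {𝒳 : MvPolynomial (Idx N) ℝ}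

lemma Dbr_rename (hinv : ∀ a : Fin N, rename (shift a) 𝒳 = 𝒳) (a : Fin N)
    (g : MvPolynomial (Idx N) ℝ) :
    poisson N (rename (shift a) g) 𝒳 = rename (shift a) (poisson N g 𝒳) := by
  rw [poisson, poisson, map_sum]
  refine (Fintype.sum_equiv (Equiv.addRight a) _ _ fun j => ?_).symm
  simp only [Equiv.coe_addRight]
  have hl : Sum.inl (j + a) = shift a (Sum.inl j) := rfl
  have hr : Sum.inr (j + a) = shift a (Sum.inr j) := rfl
  rw [map_sub, map_mul, map_mul, hl, hr]
  conv_rhs => rw [← hinv a]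
  rw [pderiv_shift, pderiv_shift, pderiv_shift, pderiv_shift]

lemma oplus_invariant (χ : MvPolynomial (Idx N) ℝ) (a : Fin N) :
    rename (shift a) (oplus N χ) = oplus N χ := shift_oplus a χ

lemma oplus_homog (χ : MvPolynomial (Idx N) ℝ) (n : ℕ) (h : χ.IsHomogeneous n) :
    (oplus N χ).IsHomogeneous n := by
  rw [oplus_eq_sum_shift]
  exact MvPolynomial.IsHomogeneous.sum _ _ _ fun a _ =>
    MvPolynomial.IsHomogeneous.rename_isHomogeneous h

lemma pderiv_inl_invariant (hinv : ∀ a : Fin N, rename (shift a) 𝒳 = 𝒳) (j : Fin N) :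
    pderiv (Sum.inl j) 𝒳 = rename (shift j) (pderiv (Sum.inl 0) 𝒳) := by
  conv_lhs => rw [← hinv j]
  rw [show (Sum.inl j : Idx N) = shift j (Sum.inl 0) by simp [shift], pderiv_shift]

lemma pderiv_inr_invariant (hinv : ∀ a : Fin N, rename (shift a) 𝒳 = 𝒳) (j : Fin N) :
    pderiv (Sum.inr j) 𝒳 = rename (shift j) (pderiv (Sum.inr 0) 𝒳) := by
  conv_lhs => rw [← hinv j]
  rw [show (Sum.inr j : Idx N) = shift j (Sum.inr 0) by simp [shift], pderiv_shift]

lemma poisson_homog (g : MvPolynomial (Idx N) ℝ) (m n : ℕ)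
    (hg : g.IsHomogeneous (m+1)) (hX : 𝒳.IsHomogeneous (n+1)) :
    (poisson N g 𝒳).IsHomogeneous (m + n) := by
  rw [poisson]
  refine MvPolynomial.IsHomogeneous.sum _ _ _ fun j _ => ?_
  exact ((homog_pderiv g m hg _).mul (homog_pderiv 𝒳 n hX _)).sub
    ((homog_pderiv g m hg _).mul (homog_pderiv 𝒳 n hX _))

lemma P1_poisson_le (hinv : ∀ a : Fin N, rename (shift a) 𝒳 = 𝒳)
    (g : MvPolynomial (Idx N) ℝ) (m : ℕ) (hg : g.IsHomogeneous (m+1)) :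
    P1 (poisson N g 𝒳) ≤ ((m+1 : ℕ) : ℝ) *
      ((P1 (pderiv (Sum.inr 0) 𝒳) + P1 (pderiv (Sum.inl 0) 𝒳)) * P1 g) := by
  classical
  set A := P1 (pderiv (Sum.inr (0 : Fin N)) 𝒳) with hA
  set B := P1 (pderiv (Sum.inl (0 : Fin N)) 𝒳) with hB
  have hA0 : 0 ≤ A := P1_nonneg _
  have hB0 : 0 ≤ B := P1_nonneg _
  have step1 : P1 (poisson N g 𝒳) ≤
      ∑ j : Fin N, (P1 (pderiv (Sum.inl j) g) * A + P1 (pderiv (Sum.inr j) g) * B) := by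
    rw [poisson]
    refine (P1_sum_le _ _).trans (Finset.sum_le_sum fun j _ => ?_)
    have h1 : P1 (pderiv (Sum.inl j) g * pderiv (Sum.inr j) 𝒳 -
        pderiv (Sum.inr j) g * pderiv (Sum.inl j) 𝒳) ≤
        P1 (pderiv (Sum.inl j) g * pderiv (Sum.inr j) 𝒳) +
        P1 (pderiv (Sum.inr j) g * pderiv (Sum.inl j) 𝒳) := by
      rw [sub_eq_add_neg]
      exact (P1_add_le _ _).trans (by rw [P1_neg])
    refine h1.trans ?_
    have e1 : P1 (pderiv (Sum.inr j) 𝒳) = A := by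
      rw [hA, pderiv_inr_invariant hinv j, P1_rename _ (shift_injective j)]
    have e2 : P1 (pderiv (Sum.inl j) 𝒳) = B := by
      rw [hB, pderiv_inl_invariant hinv j, P1_rename _ (shift_injective j)]
    refine add_le_add ((P1_mul_le _ _).trans ?_) ((P1_mul_le _ _).trans ?_)
    · rw [e1]
    · rw [e2]
  refine step1.trans ?_
  have step2 : ∑ j : Fin N, (P1 (pderiv (Sum.inl j) g) * A + P1 (pderiv (Sum.inr j) g) * B)
      ≤ (∑ l : Idx N, P1 (pderiv l g)) * (A + B) := by
    rw [Fintype.sum_sum_type, add_mul, Finset.sum_mul, Finset.sum_mul, ← Finset.sum_add_distrib]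
    refine Finset.sum_le_sum fun j _ => ?_
    have h1 : 0 ≤ P1 (pderiv (Sum.inl j) g) := P1_nonneg _
    have h2 : 0 ≤ P1 (pderiv (Sum.inr j) g) := P1_nonneg _
    nlinarith
  refine step2.trans ?_
  have step3 := sum_P1_pderiv g (m+1) hg
  have hP1g : 0 ≤ P1 g := P1_nonneg _
  calc (∑ l : Idx N, P1 (pderiv l g)) * (A + B)
      ≤ (((m+1 : ℕ) : ℝ) * P1 g) * (A + B) := by
        refine mul_le_mul_of_nonneg_right ?_ (by linarith)
        exact_mod_cast step3
    _ = ((m+1 : ℕ) : ℝ) * ((A + B) * P1 g) := by ring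

lemma iter_pvf (𝒳' : MvPolynomial (Idx N) ℝ) (P : Idx N → MvPolynomial (Idx N) ℝ) (p : ℕ) :
    (lieD (Xvec N 𝒳'))^[p] (pvf P) = pvf (fun i => (fun g => poisson N g 𝒳')^[p] (P i)) := by
  induction p with
  | zero => rfl
  | succ p ih =>
    rw [Function.iterate_succ_apply', ih, lieD_pvf]
    simp only [Function.iterate_succ_apply']

lemma iter_rename (hinv : ∀ a : Fin N, rename (shift a) 𝒳 = 𝒳) (a : Fin N)
    (q : MvPolynomial (Idx N) ℝ) (p : ℕ) :
    (fun g => poisson N g 𝒳)^[p] (rename (shift a) q) =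
      rename (shift a) ((fun g => poisson N g 𝒳)^[p] q) := by
  induction p with
  | zero => rfl
  | succ p ih => rw [Function.iterate_succ_apply', ih, Function.iterate_succ_apply',
      Dbr_rename hinv]

end Bracket

/-! ### euclidean norm lemmas -/

section Euclid
variable {N : ℕ} [NeZero N]

lemma euclNorm_eq_norm (z : Idx N → ℝ) :
    euclNorm z = ‖(WithLp.equiv 2 (Idx N → ℝ)).symm z‖ := by
  rw [euclNorm, EuclideanSpace.norm_eq]
  congr 1
  refine Finset.sum_congr rfl fun l _ => ?_
  rw [show ((WithLp.equiv 2 (Idx N → ℝ)).symm z).ofLp l = z l from rfl, Real.norm_eq_abs, sq_abs]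

lemma euclNorm_nonneg (z : Idx N → ℝ) : 0 ≤ euclNorm z := Real.sqrt_nonneg _

lemma euclNorm_sum_le {ι : Type*} (t : Finset ι) (v : ι → (Idx N → ℝ)) :
    euclNorm (∑ i ∈ t, v i) ≤ ∑ i ∈ t, euclNorm (v i) := by
  simp only [euclNorm_eq_norm]
  have h : (WithLp.equiv 2 (Idx N → ℝ)).symm (∑ i ∈ t, v i)
      = ∑ i ∈ t, (WithLp.equiv 2 (Idx N → ℝ)).symm (v i) := by simp [WithLp.equiv_symm_apply]
  rw [h]
  exact norm_sum_le _ _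

lemma sq_le_S (z : Idx N → ℝ) (l : Idx N) : z l ^ 2 ≤ ∑ l', z l' ^ 2 :=
  Finset.single_le_sum (f := fun l' => z l' ^ 2) (fun _ _ => sq_nonneg _) (Finset.mem_univ l)

lemma sum_shift_sq_le (z : Idx N → ℝ) (i0 : Idx N) :
    ∑ j : Fin N, z (shift j i0) ^ 2 ≤ ∑ l, z l ^ 2 := by
  have key : ∀ (w : Fin N → ℝ) (a : Fin N), (∑ j : Fin N, w (a + j) ^ 2) = ∑ b : Fin N, w b ^ 2 :=
    fun w a => Fintype.sum_equiv (Equiv.addLeft a) _ _ (fun j => rfl)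
  rw [Fintype.sum_sum_type]
  cases i0 with
  | inl a =>
    have : ∑ j : Fin N, z (shift j (Sum.inl a)) ^ 2 = ∑ b : Fin N, z (Sum.inl b) ^ 2 :=
      key (fun b => z (Sum.inl b)) a
    rw [this]
    have : 0 ≤ ∑ j : Fin N, z (Sum.inr j) ^ 2 := Finset.sum_nonneg fun _ _ => sq_nonneg _
    linarith
  | inr a =>
    have : ∑ j : Fin N, z (shift j (Sum.inr a)) ^ 2 = ∑ b : Fin N, z (Sum.inr b) ^ 2 :=
      key (fun b => z (Sum.inr b)) a
    rw [this]
    have : 0 ≤ ∑ j : Fin N, z (Sum.inl j) ^ 2 := Finset.sum_nonneg fun _ _ => sq_nonneg _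
    linarith

lemma key_mono (z : Idx N → ℝ) (u : Idx N →₀ ℕ) (d : ℕ) (hd : 1 ≤ d)
    (hu : ∑ i : Idx N, u i = d) :
    ∑ j : Fin N, (∏ i : Idx N, z (shift j i) ^ u i) ^ 2 ≤ (∑ l, z l ^ 2) ^ d := by
  classical
  set S := ∑ l, z l ^ 2 with hSdef
  have hS : 0 ≤ S := Finset.sum_nonneg fun _ _ => sq_nonneg _
  obtain ⟨i0, hi0⟩ : ∃ i0, u i0 ≠ 0 := by
    by_contra hc
    push_neg at hc
    rw [Finset.sum_eq_zero (fun i _ => hc i)] at hu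
    omega
  have perj : ∀ j : Fin N, (∏ i : Idx N, z (shift j i) ^ u i) ^ 2
      ≤ z (shift j i0) ^ 2 * S ^ (d - 1) := by
    intro j
    have h1 : (∏ i : Idx N, z (shift j i) ^ u i) ^ 2
        = ∏ i : Idx N, (z (shift j i) ^ 2) ^ u i := by
      rw [← Finset.prod_pow]
      exact Finset.prod_congr rfl fun i _ => by rw [← pow_mul, ← pow_mul, Nat.mul_comm]
    rw [h1, ← Finset.mul_prod_erase Finset.univ _ (Finset.mem_univ i0)]
    have hexp : u i0 = (u i0 - 1) + 1 := (Nat.succ_pred_eq_of_pos (Nat.pos_of_ne_zero hi0)).symm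
    calc (z (shift j i0) ^ 2) ^ u i0 * ∏ i ∈ Finset.univ.erase i0, (z (shift j i) ^ 2) ^ u i
        = z (shift j i0) ^ 2 * ((z (shift j i0) ^ 2) ^ (u i0 - 1) *
            ∏ i ∈ Finset.univ.erase i0, (z (shift j i) ^ 2) ^ u i) := by
          conv_lhs => rw [hexp]
          rw [pow_succ]
          ring
      _ ≤ z (shift j i0) ^ 2 * (S ^ (u i0 - 1) * ∏ i ∈ Finset.univ.erase i0, S ^ u i) := by
          refine mul_le_mul_of_nonneg_left ?_ (sq_nonneg _)
          refine mul_le_mul (pow_le_pow_left₀ (sq_nonneg _) (sq_le_S z _) _)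
            (Finset.prod_le_prod (fun _ _ => pow_nonneg (sq_nonneg _) _)
              (fun i _ => pow_le_pow_left₀ (sq_nonneg _) (sq_le_S z _) _))
            (Finset.prod_nonneg fun _ _ => pow_nonneg (sq_nonneg _) _)
            (pow_nonneg hS _)
      _ = z (shift j i0) ^ 2 * S ^ (d - 1) := by
          rw [Finset.prod_pow_eq_pow_sum, ← pow_add]
          congr 2
          have h2 := Finset.add_sum_erase Finset.univ (⇑u) (Finset.mem_univ i0)
          omega
  calc ∑ j : Fin N, (∏ i : Idx N, z (shift j i) ^ u i) ^ 2
      ≤ ∑ j : Fin N, z (shift j i0) ^ 2 * S ^ (d - 1) := Finset.sum_le_sum fun j _ => perj j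
    _ = (∑ j : Fin N, z (shift j i0) ^ 2) * S ^ (d - 1) := by rw [Finset.sum_mul]
    _ ≤ S * S ^ (d - 1) := mul_le_mul_of_nonneg_right (sum_shift_sq_le z i0) (pow_nonneg hS _)
    _ = S ^ d := by rw [← pow_succ']; congr 1; omega

lemma eval_shift_expand (q : MvPolynomial (Idx N) ℝ) (z : Idx N → ℝ) (j : Fin N) :
    eval z (rename (shift j) q) = ∑ u ∈ q.support, q.coeff u * ∏ i : Idx N, z (shift j i) ^ u i := by
  rw [MvPolynomial.eval_rename, MvPolynomial.eval_eq]
  refine Finset.sum_congr rfl fun u _ => ?_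
  congr 1
  refine Finset.prod_subset (Finset.subset_univ _) fun i _ hi => ?_
  rw [Finsupp.notMem_support_iff.mp hi, pow_zero]

lemma sqrt_pow' {S : ℝ} (hS : 0 ≤ S) (d : ℕ) : Real.sqrt (S ^ d) = Real.sqrt S ^ d := by
  have h : S ^ d = (Real.sqrt S ^ d) ^ 2 := by
    rw [← pow_mul, mul_comm, pow_mul, Real.sq_sqrt hS]
  rw [h, Real.sqrt_sq (pow_nonneg (Real.sqrt_nonneg _) _)]

lemma euclNorm_monomial_side (q : MvPolynomial (Idx N) ℝ) (d : ℕ) (hd : 1 ≤ d)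
    (hq : q.IsHomogeneous d) (z : Idx N → ℝ) (u : Idx N →₀ ℕ) (hu : u ∈ q.support)
    (V : Idx N → ℝ)
    (hV : ∑ l : Idx N, V l ^ 2 = ∑ j : Fin N, (q.coeff u * ∏ i : Idx N, z (shift j i) ^ u i) ^ 2) :
    euclNorm V ≤ |q.coeff u| * euclNorm z ^ d := by
  have hS : 0 ≤ ∑ l, z l ^ 2 := Finset.sum_nonneg fun _ _ => sq_nonneg _
  rw [euclNorm, hV]
  have h1 : ∑ j : Fin N, (q.coeff u * ∏ i : Idx N, z (shift j i) ^ u i) ^ 2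
      = q.coeff u ^ 2 * ∑ j : Fin N, (∏ i : Idx N, z (shift j i) ^ u i) ^ 2 := by
    rw [Finset.mul_sum]
    exact Finset.sum_congr rfl fun j _ => by ring
  rw [h1]
  have h2 := key_mono z u d hd (degree_of_mem_support' hq hu)
  have h3 : q.coeff u ^ 2 * ∑ j : Fin N, (∏ i : Idx N, z (shift j i) ^ u i) ^ 2
      ≤ q.coeff u ^ 2 * (∑ l, z l ^ 2) ^ d :=
    mul_le_mul_of_nonneg_left h2 (sq_nonneg _)
  refine (Real.sqrt_le_sqrt h3).trans ?_
  rw [Real.sqrt_mul (sq_nonneg _), Real.sqrt_sq_eq_abs, sqrt_pow' hS]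
  exact le_of_eq rfl

lemma euclNorm_elim_le (q h' : MvPolynomial (Idx N) ℝ) (d : ℕ) (hd : 1 ≤ d)
    (hq : q.IsHomogeneous d) (hh : h'.IsHomogeneous d) (z : Idx N → ℝ) :
    euclNorm (Sum.elim (fun j => eval z (rename (shift j) q))
      (fun j => eval z (rename (shift j) h'))) ≤ (P1 q + P1 h') * euclNorm z ^ d := by
  classical
  have hsplit : (Sum.elim (fun j => eval z (rename (shift j) q))
        (fun j => eval z (rename (shift j) h')) : Idx N → ℝ)
      = (∑ u ∈ q.support, (Sum.elim (fun j => q.coeff u * ∏ i : Idx N, z (shift j i) ^ u i)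
          (fun _ => (0:ℝ)) : Idx N → ℝ))
        + (∑ u ∈ h'.support, (Sum.elim (fun _ => (0:ℝ))
          (fun j => h'.coeff u * ∏ i : Idx N, z (shift j i) ^ u i) : Idx N → ℝ)) := by
    funext i
    rw [Pi.add_apply, Finset.sum_apply, Finset.sum_apply]
    cases i with
    | inl j =>
      simp only [Sum.elim_inl, eval_shift_expand, Finset.sum_const_zero, add_zero]
    | inr j =>
      simp only [Sum.elim_inr, eval_shift_expand, Finset.sum_const_zero, zero_add]
  rw [hsplit]
  have htri : euclNorm ((∑ u ∈ q.support, (Sum.elim (fun j => q.coeff u * ∏ i : Idx N,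
        z (shift j i) ^ u i) (fun _ => (0:ℝ)) : Idx N → ℝ))
        + (∑ u ∈ h'.support, (Sum.elim (fun _ => (0:ℝ))
          (fun j => h'.coeff u * ∏ i : Idx N, z (shift j i) ^ u i) : Idx N → ℝ)))
      ≤ euclNorm (∑ u ∈ q.support, (Sum.elim (fun j => q.coeff u * ∏ i : Idx N,
          z (shift j i) ^ u i) (fun _ => (0:ℝ)) : Idx N → ℝ))
        + euclNorm (∑ u ∈ h'.support, (Sum.elim (fun _ => (0:ℝ))
          (fun j => h'.coeff u * ∏ i : Idx N, z (shift j i) ^ u i) : Idx N → ℝ)) := by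
    simp only [euclNorm_eq_norm]
    exact norm_add_le _ _
  refine htri.trans ?_
  have hq1 : euclNorm (∑ u ∈ q.support, (Sum.elim (fun j => q.coeff u * ∏ i : Idx N,
        z (shift j i) ^ u i) (fun _ => (0:ℝ)) : Idx N → ℝ)) ≤ P1 q * euclNorm z ^ d := by
    refine (euclNorm_sum_le _ _).trans ?_
    rw [P1, Finset.sum_mul]
    refine Finset.sum_le_sum fun u hu => ?_
    refine euclNorm_monomial_side q d hd hq z u hu _ ?_
    rw [Fintype.sum_sum_type]
    simp only [Sum.elim_inl, Sum.elim_inr]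
    simp
  have hh1 : euclNorm (∑ u ∈ h'.support, (Sum.elim (fun _ => (0:ℝ))
        (fun j => h'.coeff u * ∏ i : Idx N, z (shift j i) ^ u i) : Idx N → ℝ))
      ≤ P1 h' * euclNorm z ^ d := by
    refine (euclNorm_sum_le _ _).trans ?_
    rw [P1, Finset.sum_mul]
    refine Finset.sum_le_sum fun u hu => ?_
    refine euclNorm_monomial_side h' d hd hh z u hu _ ?_
    rw [Fintype.sum_sum_type]
    simp only [Sum.elim_inl, Sum.elim_inr]
    simp
  calc _ ≤ P1 q * euclNorm z ^ d + P1 h' * euclNorm z ^ d := add_le_add hq1 hh1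
    _ = (P1 q + P1 h') * euclNorm z ^ d := by ring

end Euclid

theorem iterated_lie_derivative_field_estimate (N : ℕ) [NeZero N]
    (r s : ℕ) (hr : 1 ≤ r) (hs : 1 ≤ s)
    (χ f : MvPolynomial (Idx N) ℝ)
    (hχ : χ.IsHomogeneous (r + 1)) (hf : f.IsHomogeneous (s + 1)) :
    (∀ (p : ℕ), 1 ≤ p → ∀ z : Idx N → ℝ,
        ‖(lieD (Xvec N (oplus N χ)))^[p] (Xvec N (oplus N f)) z‖ ≤
          (∏ j ∈ Finset.range p, ((s : ℝ) + j * ((r : ℝ) - 1))) *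
            hamNorm N 1 (oplus N f) * hamNorm N 1 (oplus N χ) ^ p *
            ‖z‖ ^ (s + p * (r - 1))) ∧
    (∀ (p : ℕ), 1 ≤ p → ∀ z : Idx N → ℝ,
        euclNorm ((lieD (Xvec N (oplus N χ)))^[p] (Xvec N (oplus N f)) z) ≤
          (∏ j ∈ Finset.range p, ((s : ℝ) + j * ((r : ℝ) - 1))) *
            hamNorm N 1 (oplus N f) * hamNorm N 1 (oplus N χ) ^ p *
            euclNorm z ^ (s + p * (r - 1))) := by
  classical
  set 𝒳 := oplus N χ with h𝒳
  set F := oplus N f with hF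
  have hinv : ∀ a : Fin N, rename (shift a) 𝒳 = 𝒳 := oplus_invariant χ
  have hinvF : ∀ a : Fin N, rename (shift a) F = F := oplus_invariant f
  have hXh : 𝒳.IsHomogeneous (r+1) := oplus_homog χ _ hχ
  have hFh : F.IsHomogeneous (s+1) := oplus_homog f _ hf
  set g0 : MvPolynomial (Idx N) ℝ := pderiv (Sum.inr 0) F with hg0
  set h0 : MvPolynomial (Idx N) ℝ := -pderiv (Sum.inl 0) F with hh0
  set D : MvPolynomial (Idx N) ℝ → MvPolynomial (Idx N) ℝ := fun g => poisson N g 𝒳 with hD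
  -- structure of the iterated Lie derivative
  have key : ∀ (p : ℕ) (z : Idx N → ℝ), (lieD (Xvec N 𝒳))^[p] (Xvec N F) z =
      Sum.elim (fun j => eval z (rename (shift j) (D^[p] g0)))
        (fun j => eval z (rename (shift j) (D^[p] h0))) := by
    intro p z
    rw [Xvec_eq_pvf F, iter_pvf]
    funext i
    cases i with
    | inl j =>
      show eval z (D^[p] (pderiv (Sum.inr j) F)) = _
      rw [pderiv_inr_invariant hinvF j, iter_rename hinv]; rfl
    | inr j =>
      show eval z (D^[p] (-pderiv (Sum.inl j) F)) = _
      rw [pderiv_inl_invariant hinvF j, ← map_neg (rename (R := ℝ) (shift j)), iter_rename hinv]; rfl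
  -- homogeneity of the iterates
  have hgp : ∀ p : ℕ, (D^[p] g0).IsHomogeneous (s + p*(r-1)) ∧
      (D^[p] h0).IsHomogeneous (s + p*(r-1)) := by
    intro p
    induction p with
    | zero =>
      constructor
      · simpa using homog_pderiv F s hFh (Sum.inr 0)
      · simpa using (homog_pderiv F s hFh (Sum.inl 0)).neg
    | succ p ih =>
      have e1 : s + p*(r-1) = (s + p*(r-1) - 1) + 1 := by omega
      have e4 : (p+1)*(r-1) = p*(r-1) + (r-1) := by ring
      have e2 : (s + p*(r-1) - 1) + r = s + (p+1)*(r-1) := by omega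
      constructor
      · rw [Function.iterate_succ_apply', ← e2]
        exact poisson_homog _ _ _ (e1 ▸ ih.1) hXh
      · rw [Function.iterate_succ_apply', ← e2]
        exact poisson_homog _ _ _ (e1 ▸ ih.2) hXh
  -- the coefficient estimate
  have hAB : P1 (pderiv (Sum.inr (0:Fin N)) 𝒳) + P1 (pderiv (Sum.inl (0:Fin N)) 𝒳)
      = hamNorm N 1 𝒳 := by
    rw [hamNorm, pnorm_one_s18, pnorm_one_s18, P1_neg]
  have hamX0 : 0 ≤ hamNorm N 1 𝒳 := by
    rw [← hAB]; exact add_nonneg (P1_nonneg _) (P1_nonneg _)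
  have hamF0 : hamNorm N 1 F = P1 g0 + P1 h0 := by rw [hamNorm, pnorm_one_s18, pnorm_one_s18]
  have hamFnn : 0 ≤ hamNorm N 1 F := by
    rw [hamF0]; exact add_nonneg (P1_nonneg _) (P1_nonneg _)
  have prodnn : ∀ p : ℕ, 0 ≤ ∏ j ∈ Finset.range p, ((s : ℝ) + j * ((r : ℝ) - 1)) := by
    intro p
    refine Finset.prod_nonneg fun j _ => ?_
    have h1 : (1:ℝ) ≤ (r:ℝ) := by exact_mod_cast hr
    have h2 : (1:ℝ) ≤ (s:ℝ) := by exact_mod_cast hs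
    have h3 : (0:ℝ) ≤ (j:ℝ) := Nat.cast_nonneg _
    nlinarith
  have hP1 : ∀ p : ℕ, P1 (D^[p] g0) + P1 (D^[p] h0) ≤
      (∏ j ∈ Finset.range p, ((s : ℝ) + j * ((r : ℝ) - 1))) *
        hamNorm N 1 F * hamNorm N 1 𝒳 ^ p := by
    intro p
    induction p with
    | zero => simp [hamF0]
    | succ p ih =>
      have e1 : s + p*(r-1) = (s + p*(r-1) - 1) + 1 := by omega
      have hcast : (((s + p*(r-1) - 1 : ℕ) + 1 : ℕ) : ℝ) = (s:ℝ) + p * ((r:ℝ) - 1) := by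
        have : ((s + p*(r-1) : ℕ) : ℝ) = (s:ℝ) + p * ((r:ℝ) - 1) := by
          push_cast [Nat.cast_sub hr]
          ring
        rw [← this]
        congr 1
        omega
      have hb1 : P1 (D^[p+1] g0) ≤ ((s:ℝ) + p * ((r:ℝ) - 1)) *
          (hamNorm N 1 𝒳 * P1 (D^[p] g0)) := by
        rw [Function.iterate_succ_apply']
        refine (P1_poisson_le hinv _ _ (e1 ▸ (hgp p).1)).trans ?_
        rw [hcast, hAB]
      have hb2 : P1 (D^[p+1] h0) ≤ ((s:ℝ) + p * ((r:ℝ) - 1)) *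
          (hamNorm N 1 𝒳 * P1 (D^[p] h0)) := by
        rw [Function.iterate_succ_apply']
        refine (P1_poisson_le hinv _ _ (e1 ▸ (hgp p).2)).trans ?_
        rw [hcast, hAB]
      have hfac : (0:ℝ) ≤ (s:ℝ) + p * ((r:ℝ) - 1) := by
        have h1 : (1:ℝ) ≤ (r:ℝ) := by exact_mod_cast hr
        have h2 : (1:ℝ) ≤ (s:ℝ) := by exact_mod_cast hs
        have h3 : (0:ℝ) ≤ (p:ℝ) := Nat.cast_nonneg _
        nlinarith
      calc P1 (D^[p+1] g0) + P1 (D^[p+1] h0)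
          ≤ ((s:ℝ) + p * ((r:ℝ) - 1)) * (hamNorm N 1 𝒳 * (P1 (D^[p] g0) + P1 (D^[p] h0))) := by
            rw [mul_add, mul_add]; exact add_le_add hb1 hb2
        _ ≤ ((s:ℝ) + p * ((r:ℝ) - 1)) * (hamNorm N 1 𝒳 *
            ((∏ j ∈ Finset.range p, ((s : ℝ) + j * ((r : ℝ) - 1))) *
              hamNorm N 1 F * hamNorm N 1 𝒳 ^ p)) := by
            refine mul_le_mul_of_nonneg_left (mul_le_mul_of_nonneg_left ih hamX0) hfac
        _ = (∏ j ∈ Finset.range (p+1), ((s : ℝ) + j * ((r : ℝ) - 1))) *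
              hamNorm N 1 F * hamNorm N 1 𝒳 ^ (p+1) := by
            rw [Finset.prod_range_succ, pow_succ]
            ring
  have hd1 : ∀ p : ℕ, 1 ≤ s + p*(r-1) := fun p => by omega
  constructor
  · intro p _ z
    rw [key p z]
    set d := s + p*(r-1) with hd
    have hznn : (0:ℝ) ≤ ‖z‖ ^ d := pow_nonneg (norm_nonneg _) _
    have hC : (0:ℝ) ≤ (∏ j ∈ Finset.range p, ((s : ℝ) + j * ((r : ℝ) - 1))) *
        hamNorm N 1 F * hamNorm N 1 𝒳 ^ p * ‖z‖ ^ d :=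
      mul_nonneg (mul_nonneg (mul_nonneg (prodnn p) hamFnn) (pow_nonneg hamX0 p)) hznn
    refine pi_norm_le_iff_of_nonneg hC |>.mpr ?_
    intro i
    have hzb : ∀ (j : Fin N) (i' : Idx N), |(z ∘ shift j) i'| ≤ ‖z‖ := by
      intro j i'
      exact norm_le_pi_norm z (shift j i')
    have hcomp : ∀ (q : MvPolynomial (Idx N) ℝ), q.IsHomogeneous d → ∀ j : Fin N,
        |eval z (rename (shift j) q)| ≤ P1 q * ‖z‖ ^ d := by
      intro q hq j
      rw [MvPolynomial.eval_rename]
      exact eval_abs_le hq (hzb j)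
    have hsum : P1 (D^[p] g0) + P1 (D^[p] h0) ≤
        (∏ j ∈ Finset.range p, ((s : ℝ) + j * ((r : ℝ) - 1))) *
          hamNorm N 1 F * hamNorm N 1 𝒳 ^ p := hP1 p
    cases i with
    | inl j =>
      refine le_trans ?_ (mul_le_mul_of_nonneg_right hsum hznn)
      have := hcomp _ (hgp p).1 j
      have h2 : (0:ℝ) ≤ P1 (D^[p] h0) * ‖z‖ ^ d :=
        mul_nonneg (P1_nonneg _) hznn
      simp only [Sum.elim_inl, Real.norm_eq_abs]
      rw [add_mul]
      linarith
    | inr j =>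
      refine le_trans ?_ (mul_le_mul_of_nonneg_right hsum hznn)
      have := hcomp _ (hgp p).2 j
      have h2 : (0:ℝ) ≤ P1 (D^[p] g0) * ‖z‖ ^ d :=
        mul_nonneg (P1_nonneg _) hznn
      simp only [Sum.elim_inr, Real.norm_eq_abs]
      rw [add_mul]
      linarith
  · intro p _ z
    rw [key p z]
    refine (euclNorm_elim_le _ _ _ (hd1 p) (hgp p).1 (hgp p).2 z).trans ?_
    have he : (0:ℝ) ≤ euclNorm z ^ (s + p*(r-1)) := pow_nonneg (euclNorm_nonneg _) _
    calc (P1 (D^[p] g0) + P1 (D^[p] h0)) * euclNorm z ^ (s + p*(r-1))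
        ≤ ((∏ j ∈ Finset.range p, ((s : ℝ) + j * ((r : ℝ) - 1))) *
            hamNorm N 1 F * hamNorm N 1 𝒳 ^ p) * euclNorm z ^ (s + p*(r-1)) :=
          mul_le_mul_of_nonneg_right (hP1 p) he
      _ = _ := by ring
end
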